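/- arXiv:2409.18684 — 4 statements merged into one kernel-verified Lean document; each statement's English description precedes it below -/
import Mathlib

section
/- Let a < b be real numbers (or ±∞), let W be a finite signed measure on the interval (a,b), and let u : (a,b) → ℝ be a nonnegative increasing function. If W((t,b)) ≥ 0 for all t ∈ (a,b), then ∫_{(t,b)} u dW ≥ 0 for all t ∈ (a,b). -/
open MeasureTheory Set Filter Topology

set_option maxHeartbeats 1000000

private lemma bp_W_apply (W : MeasureTheory.SignedMeasure ℝ) {s : Set ℝ}
    (hs : MeasurableSet s) :
    W s = (W.toJordanDecomposition.posPart s).toReal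
        - (W.toJordanDecomposition.negPart s).toReal := by
  conv_lhs => rw [← W.toSignedMeasure_toJordanDecomposition]
  rw [MeasureTheory.JordanDecomposition.toSignedMeasure,
    MeasureTheory.VectorMeasure.sub_apply,
    Measure.toSignedMeasure_apply_measurable hs,
    Measure.toSignedMeasure_apply_measurable hs]
  rfl

private lemma bp_measS (b : EReal) (t : ℝ) :
    MeasurableSet {x : ℝ | t < x ∧ (x : EReal) < b} :=
  measurableSet_Ioi.inter (measurable_coe_real_ereal measurableSet_Iio)

private lemma bp_measA (b : EReal) (u : ℝ → ℝ) (hu : Measurable u) (t s : ℝ) :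
    MeasurableSet {x : ℝ | t < x ∧ (x : EReal) < b ∧ s < u x} :=
  measurableSet_Ioi.inter
    ((measurable_coe_real_ereal measurableSet_Iio).inter (hu measurableSet_Ioi))

private lemma bp_key (a b : EReal)
    (W : MeasureTheory.SignedMeasure ℝ) (u : ℝ → ℝ)
    (hu_mono : ∀ x y : ℝ, a < (x : EReal) → (y : EReal) < b → x ≤ y → u x ≤ u y)
    (hu_meas : Measurable u)
    (hW : ∀ t : ℝ, a < (t : EReal) → (t : EReal) < b →
      0 ≤ W {x : ℝ | (t : EReal) < (x : EReal) ∧ (x : EReal) < b})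
    (t : ℝ) (hat : a < (t : EReal)) (htb : (t : EReal) < b) (s : ℝ) :
    W.toJordanDecomposition.negPart {x : ℝ | t < x ∧ (x : EReal) < b ∧ s < u x}
      ≤ W.toJordanDecomposition.posPart {x : ℝ | t < x ∧ (x : EReal) < b ∧ s < u x} := by
  set μ := W.toJordanDecomposition.posPart with hμdef
  set ν := W.toJordanDecomposition.negPart with hνdef
  set A := {x : ℝ | t < x ∧ (x : EReal) < b ∧ s < u x} with hAdef
  -- a basic consequence of hW, for real endpoints
  have hW' : ∀ r : ℝ, a < (r : EReal) → (r : EReal) < b →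
      ν {x : ℝ | r < x ∧ (x : EReal) < b} ≤ μ {x : ℝ | r < x ∧ (x : EReal) < b} := by
    intro r har hrb
    have h0 := hW r har hrb
    have hseteq : {x : ℝ | (r : EReal) < (x : EReal) ∧ (x : EReal) < b}
        = {x : ℝ | r < x ∧ (x : EReal) < b} := by
      ext x; simp [EReal.coe_lt_coe_iff]
    rw [hseteq, bp_W_apply W (bp_measS b r)] at h0
    exact (ENNReal.toReal_le_toReal (measure_ne_top _ _) (measure_ne_top _ _)).mp
      (sub_nonneg.mp h0)
  by_cases hA : A = ∅
  · simp [hA]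
  obtain ⟨x₀, hx₀⟩ := nonempty_iff_ne_empty.mpr hA
  have hbdd : BddBelow A := ⟨t, fun x hx => le_of_lt hx.1⟩
  set c := sInf A with hcdef
  have hct : t ≤ c := le_csInf ⟨x₀, hx₀⟩ (fun x hx => hx.1.le)
  have hcx₀ : c ≤ x₀ := csInf_le hbdd hx₀
  have hcb : (c : EReal) < b := lt_of_le_of_lt (EReal.coe_le_coe_iff.mpr hcx₀) hx₀.2.1
  have hBsubA : {x : ℝ | c < x ∧ (x : EReal) < b} ⊆ A := by
    rintro x ⟨hcx, hxb⟩
    obtain ⟨y, hyA, hyx⟩ := exists_lt_of_csInf_lt ⟨x₀, hx₀⟩ hcx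
    refine ⟨lt_trans hyA.1 hyx, hxb, lt_of_lt_of_le hyA.2.2 ?_⟩
    exact hu_mono y x (lt_trans hat (EReal.coe_lt_coe_iff.mpr hyA.1)) hxb hyx.le
  by_cases hcA : c ∈ A
  · -- A = [c, b)
    have hAeq : A = {x : ℝ | c ≤ x ∧ (x : EReal) < b} := by
      apply Subset.antisymm
      · intro x hx; exact ⟨csInf_le hbdd hx, hx.2.1⟩
      · rintro x ⟨hcx, hxb⟩
        rcases eq_or_lt_of_le hcx with h | h
        · exact h ▸ hcA
        · exact hBsubA ⟨h, hxb⟩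
    have htc : t < c := hcA.1
    set g : ℕ → Set ℝ := fun n => {x : ℝ | c - 1/(n+1) < x ∧ (x : EReal) < b} with hgdef
    have hganti : Antitone g := by
      intro m n hmn x hx
      have h1 : (1:ℝ)/(n+1) ≤ 1/(m+1) := by
        apply one_div_le_one_div_of_le (by positivity)
        have := (Nat.cast_le (α := ℝ)).mpr hmn; linarith
      exact ⟨by have := hx.1; linarith [this], hx.2⟩
    have hiInter : (⋂ n, g n) = {x : ℝ | c ≤ x ∧ (x : EReal) < b} := by
      ext x
      simp only [mem_iInter, hgdef, mem_setOf_eq]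
      constructor
      · intro h
        refine ⟨?_, (h 0).2⟩
        by_contra hxc
        push_neg at hxc
        obtain ⟨n, hn⟩ := exists_nat_one_div_lt (sub_pos.mpr hxc)
        have := (h n).1
        linarith
      · rintro ⟨hcx, hxb⟩ n
        refine ⟨?_, hxb⟩
        have : (0:ℝ) < 1/(n+1) := by positivity
        linarith
    have hμt : Tendsto (μ ∘ g) atTop (𝓝 (μ A)) := by
      rw [hAeq, ← hiInter]
      exact tendsto_measure_iInter_atTop
        (fun n => (bp_measS b _).nullMeasurableSet) hganti ⟨0, measure_ne_top _ _⟩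
    have hνt : Tendsto (ν ∘ g) atTop (𝓝 (ν A)) := by
      rw [hAeq, ← hiInter]
      exact tendsto_measure_iInter_atTop
        (fun n => (bp_measS b _).nullMeasurableSet) hganti ⟨0, measure_ne_top _ _⟩
    have hev : (ν ∘ g) ≤ᶠ[atTop] (μ ∘ g) := by
      obtain ⟨N, hN⟩ := exists_nat_one_div_lt (sub_pos.mpr htc)
      filter_upwards [eventually_ge_atTop N] with n hn
      have h1 : (1:ℝ)/(n+1) ≤ 1/(N+1) := by
        apply one_div_le_one_div_of_le (by positivity)
        have := (Nat.cast_le (α := ℝ)).mpr hn; linarith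
      have htn : t < c - 1/(n+1) := by linarith
      have hpos : (0:ℝ) < 1/(n+1) := by positivity
      have hatn : a < ((c - 1/(n+1) : ℝ) : EReal) :=
        lt_trans hat (EReal.coe_lt_coe_iff.mpr htn)
      have htnb : ((c - 1/(n+1) : ℝ) : EReal) < b :=
        lt_trans (EReal.coe_lt_coe_iff.mpr (by linarith : c - 1/(n+1) < c)) hcb
      exact hW' (c - 1/(n+1)) hatn htnb
    exact le_of_tendsto_of_tendsto hνt hμt hev
  · -- A = (c, b)
    have hAeq : A = {x : ℝ | c < x ∧ (x : EReal) < b} := by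
      apply Subset.antisymm _ hBsubA
      intro x hx
      refine ⟨lt_of_le_of_ne (csInf_le hbdd hx) ?_, hx.2.1⟩
      intro h
      exact hcA (h ▸ hx)
    have hac : a < (c : EReal) := lt_of_lt_of_le hat (EReal.coe_le_coe_iff.mpr hct)
    rw [hAeq]
    exact hW' c hac hcb

/-- **Lemma 1 (Barlow–Proschan).**  Let `a < b` (extended reals), let `W` be a finite
signed measure on the interval `(a,b)` and let `u` be a nonnegative increasing function
on `(a,b)`, integrable with respect to the total variation of `W`.  If `W((t,b)) ≥ 0` for
all `t ∈ (a,b)`, then `∫_{(t,b)} u dW ≥ 0` for all `t ∈ (a,b)` (the integral with respect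
to `W` being the difference of the integrals with respect to the positive and negative
parts of its Jordan decomposition). -/
theorem barlow_proschan_integral_nonneg
    (a b : EReal) (hab : a < b)
    (W : MeasureTheory.SignedMeasure ℝ) (u : ℝ → ℝ)
    (hu_nonneg : ∀ x : ℝ, a < (x : EReal) → (x : EReal) < b → 0 ≤ u x)
    (hu_mono : ∀ x y : ℝ, a < (x : EReal) → (y : EReal) < b → x ≤ y → u x ≤ u y)
    (hu_meas : Measurable u)
    (hu_int : IntegrableOn u {x : ℝ | a < (x : EReal) ∧ (x : EReal) < b} W.totalVariation)
    (hW : ∀ t : ℝ, a < (t : EReal) → (t : EReal) < b →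
      0 ≤ W {x : ℝ | (t : EReal) < (x : EReal) ∧ (x : EReal) < b}) :
    ∀ t : ℝ, a < (t : EReal) → (t : EReal) < b →
      0 ≤ (∫ x in {x : ℝ | (t : EReal) < (x : EReal) ∧ (x : EReal) < b}, u x
              ∂W.toJordanDecomposition.posPart) -
          ∫ x in {x : ℝ | (t : EReal) < (x : EReal) ∧ (x : EReal) < b}, u x
              ∂W.toJordanDecomposition.negPart := by
  intro t hat htb
  set μ := W.toJordanDecomposition.posPart with hμdef
  set ν := W.toJordanDecomposition.negPart with hνdef
  have hSeq : {x : ℝ | (t : EReal) < (x : EReal) ∧ (x : EReal) < b}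
      = {x : ℝ | t < x ∧ (x : EReal) < b} := by
    ext x; simp [EReal.coe_lt_coe_iff]
  rw [hSeq]
  set S := {x : ℝ | t < x ∧ (x : EReal) < b} with hSdef
  have hSm : MeasurableSet S := bp_measS b t
  have hnn : ∀ x ∈ S, 0 ≤ u x := fun x hx =>
    hu_nonneg x (lt_trans hat (EReal.coe_lt_coe_iff.mpr hx.1)) hx.2
  have hnnμ : 0 ≤ᵐ[μ.restrict S] u := (ae_restrict_iff' hSm).mpr (ae_of_all _ hnn)
  have hnnν : 0 ≤ᵐ[ν.restrict S] u := (ae_restrict_iff' hSm).mpr (ae_of_all _ hnn)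
  have hμeq : ∫ x in S, u x ∂μ = (∫⁻ x in S, ENNReal.ofReal (u x) ∂μ).toReal :=
    integral_eq_lintegral_of_nonneg_ae hnnμ hu_meas.aestronglyMeasurable
  have hνeq : ∫ x in S, u x ∂ν = (∫⁻ x in S, ENNReal.ofReal (u x) ∂ν).toReal :=
    integral_eq_lintegral_of_nonneg_ae hnnν hu_meas.aestronglyMeasurable
  rw [hμeq, hνeq, sub_nonneg]
  have hμfin : ∫⁻ x in S, ENNReal.ofReal (u x) ∂μ ≠ ⊤ := by
    have hSsub : S ⊆ {x : ℝ | a < (x : EReal) ∧ (x : EReal) < b} := fun x hx =>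
      ⟨lt_trans hat (EReal.coe_lt_coe_iff.mpr hx.1), hx.2⟩
    have hle2 : μ ≤ W.totalVariation := by
      have h : W.totalVariation = μ + ν := rfl
      rw [h]; exact Measure.le_add_right le_rfl
    have hfin := hu_int.2
    exact ne_of_lt (lt_of_le_of_lt
      (lintegral_mono' (Measure.restrict_mono hSsub hle2)
        (fun x => Real.ofReal_le_enorm (u x))) hfin)
  apply ENNReal.toReal_mono hμfin
  rw [lintegral_eq_lintegral_meas_lt _ hnnν hu_meas.aemeasurable,
    lintegral_eq_lintegral_meas_lt _ hnnμ hu_meas.aemeasurable]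
  apply lintegral_mono
  intro s
  simp only
  rw [Measure.restrict_apply (measurableSet_lt measurable_const hu_meas),
    Measure.restrict_apply (measurableSet_lt measurable_const hu_meas)]
  have hset : {x : ℝ | s < u x} ∩ S = {x : ℝ | t < x ∧ (x : EReal) < b ∧ s < u x} := by
    rw [hSdef]; ext x; simp only [mem_inter_iff, mem_setOf_eq]; tauto
  rw [hset]
  exact bp_key a b W u hu_mono hu_meas hW t hat htb s
end

section
/- Let X and Y be nonnegative continuous random variables with finite means and strictly increasing distribution functions F and G. If X ≤_ttt Y, then X_h ≤_ttt Y_h for every starshaped distortion function h. -/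
open MeasureTheory Set Filter

/-- The (generalized inverse) quantile function of a distribution function `F`. -/
noncomputable def quantile (F : ℝ → ℝ) (p : ℝ) : ℝ := sInf {x : ℝ | p ≤ F x}

/-- `F` is the distribution function of a nonnegative random variable
(with total mass one). -/
def IsNonnegCDF (F : ℝ → ℝ) : Prop :=
  Monotone F ∧ (∀ x : ℝ, x ≤ 0 → F x = 0) ∧ Tendsto F atTop (nhds 1)

/-- A distortion function: a left-continuous increasing map of `[0,1]` onto itself
with `h 0 = 0` and `h 1 = 1`. -/
def IsDistortionFn (h : ℝ → ℝ) : Prop :=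
  MonotoneOn h (Icc 0 1) ∧ (∀ p ∈ Ioc (0:ℝ) 1, ContinuousWithinAt h (Iio p) p) ∧
    h 0 = 0 ∧ h 1 = 1 ∧ MapsTo h (Icc 0 1) (Icc 0 1)

/-- `h` is starshaped: `h p / p` is increasing on `(0,1]`. -/
def Starshaped (h : ℝ → ℝ) : Prop := MonotoneOn (fun p => h p / p) (Ioc 0 1)

/-- `h` is antistarshaped: `h p / p` is decreasing on `(0,1]`. -/
def Antistarshaped (h : ℝ → ℝ) : Prop := AntitoneOn (fun p => h p / p) (Ioc 0 1)

/-- Distribution function of the distorted random variable `X_h`,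
whose survival function is `h ∘ (1 - F)`. -/
noncomputable def distortedCDF (h F : ℝ → ℝ) : ℝ → ℝ := fun x => 1 - h (1 - F x)

/-- `∫_0^{F⁻¹(p)} (1 - F(x)) dx`. -/
noncomputable def tttIntegral (F : ℝ → ℝ) (p : ℝ) : ℝ :=
  ∫ x in (0:ℝ)..(quantile F p), (1 - F x)

/-- `∫_{F⁻¹(p)}^∞ (1 - F(x)) dx`. -/
noncomputable def ewIntegral (F : ℝ → ℝ) (p : ℝ) : ℝ :=
  ∫ x in Ioi (quantile F p), (1 - F x)

/-- `∫_0^{F⁻¹(p)} F(x) dx`. -/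
noncomputable def mitIntegral (F : ℝ → ℝ) (p : ℝ) : ℝ :=
  ∫ x in (0:ℝ)..(quantile F p), F x

/-- Total time on test transform order. -/
def TTT_le (F G : ℝ → ℝ) : Prop := ∀ p ∈ Ioo (0:ℝ) 1, tttIntegral F p ≤ tttIntegral G p

/-- Excess wealth order. -/
def EW_le (F G : ℝ → ℝ) : Prop := ∀ p ∈ Ioo (0:ℝ) 1, ewIntegral F p ≤ ewIntegral G p

/-- Decreasing mean residual life order. -/
def DMRL_le (F G : ℝ → ℝ) : Prop :=
  MonotoneOn (fun p => ewIntegral G p / ewIntegral F p) (Ioo (0:ℝ) 1)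

/-- Quantile mean inactivity time order. -/
def QMIT_le (F G : ℝ → ℝ) : Prop :=
  AntitoneOn (fun p => mitIntegral F p / mitIntegral G p) (Ioo (0:ℝ) 1)

section Helpers

open Topology

lemma cdf_nonneg {F : ℝ → ℝ} (hF : IsNonnegCDF F) (x : ℝ) : 0 ≤ F x := by
  have := hF.2.1 (min x 0) (min_le_right x 0)
  calc (0:ℝ) = F (min x 0) := this.symm
  _ ≤ F x := hF.1 (min_le_left x 0)

lemma cdf_le_one {F : ℝ → ℝ} (hF : IsNonnegCDF F) (x : ℝ) : F x ≤ 1 :=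
  Monotone.ge_of_tendsto hF.1 hF.2.2 x

lemma cdf_lt_one {F : ℝ → ℝ} (hF : IsNonnegCDF F) (hFstrict : StrictMonoOn F (Ici 0))
    (x : ℝ) : F x < 1 := by
  rcases lt_or_ge (F x) 1 with h | h
  · exact h
  · exfalso
    have h1 : F (max x 0) = 1 :=
      le_antisymm (cdf_le_one hF _) (le_trans h (hF.1 (le_max_left x 0)))
    have h2 : F (max x 0) < F (max x 0 + 1) :=
      hFstrict (le_max_right x 0) (le_trans (le_max_right x 0) (by linarith)) (by linarith)
    have := cdf_le_one hF (max x 0 + 1)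
    linarith

lemma quantile_mem {F : ℝ → ℝ} (hF : IsNonnegCDF F) (hFcont : Continuous F)
    {w : ℝ} (hw : w ∈ Ioo (0:ℝ) 1) :
    quantile F w ∈ {x : ℝ | w ≤ F x} ∧ 0 < quantile F w := by
  have hne : {x : ℝ | w ≤ F x}.Nonempty := by
    have := (hF.2.2.eventually (Ioi_mem_nhds hw.2)).exists
    obtain ⟨x, hx⟩ := this
    exact ⟨x, le_of_lt hx⟩
  have hbdd : BddBelow {x : ℝ | w ≤ F x} := by
    refine ⟨0, fun x hx => ?_⟩
    by_contra hx0
    push_neg at hx0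
    have := hF.2.1 x (le_of_lt hx0)
    simp only [mem_setOf_eq] at hx
    linarith [hw.1]
  have hclosed : IsClosed {x : ℝ | w ≤ F x} := isClosed_le continuous_const hFcont
  have hmem : quantile F w ∈ {x : ℝ | w ≤ F x} := hclosed.csInf_mem hne hbdd
  refine ⟨hmem, ?_⟩
  by_contra hq
  push_neg at hq
  have := hF.2.1 _ hq
  simp only [mem_setOf_eq, this] at hmem
  linarith [hw.1]

lemma cdf_quantile {F : ℝ → ℝ} (hF : IsNonnegCDF F) (hFcont : Continuous F)
    {w : ℝ} (hw : w ∈ Ioo (0:ℝ) 1) : F (quantile F w) = w := by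
  obtain ⟨hmem, hpos⟩ := quantile_mem hF hFcont hw
  refine le_antisymm ?_ hmem
  by_contra hgt
  push_neg at hgt
  have hiv : Icc (F 0) (F (quantile F w)) ⊆ F '' Icc 0 (quantile F w) :=
    intermediate_value_Icc (le_of_lt hpos) hFcont.continuousOn
  have hwmem : w ∈ Icc (F 0) (F (quantile F w)) := by
    rw [hF.2.1 0 le_rfl]
    exact ⟨le_of_lt hw.1, le_of_lt hgt⟩
  obtain ⟨x, hx, hfx⟩ := hiv hwmem
  have hxA : x ∈ {x : ℝ | w ≤ F x} := le_of_eq hfx.symm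
  have : quantile F w ≤ x := csInf_le ⟨0, fun y hy => by
    by_contra hy0; push_neg at hy0
    have := hF.2.1 y (le_of_lt hy0)
    simp only [mem_setOf_eq, this] at hy; linarith [hw.1]⟩ hxA
  have hxq : x = quantile F w := le_antisymm hx.2 this
  rw [hxq] at hfx
  linarith

lemma lt_quantile_imp {F : ℝ → ℝ} (hF : IsNonnegCDF F) {w : ℝ} (hw : 0 < w)
    {x : ℝ} (hx : x < quantile F w) : F x < w := by
  by_contra hge
  push_neg at hge
  have hbdd : BddBelow {x : ℝ | w ≤ F x} := by
    refine ⟨0, fun y hy => ?_⟩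
    by_contra hy0; push_neg at hy0
    have := hF.2.1 y (le_of_lt hy0)
    simp only [mem_setOf_eq, this] at hy; linarith
  exact absurd (csInf_le hbdd hge) (not_le.mpr hx)

lemma quantile_one {F : ℝ → ℝ} (hF : IsNonnegCDF F) (hFstrict : StrictMonoOn F (Ici 0)) :
    quantile F 1 = 0 := by
  have : {x : ℝ | (1:ℝ) ≤ F x} = ∅ := by
    ext x
    simp only [mem_setOf_eq, mem_empty_iff_false, iff_false, not_le]
    exact cdf_lt_one hF hFstrict x
  rw [quantile, this, Real.sInf_empty]

noncomputable def distThreshold (h : ℝ → ℝ) (p : ℝ) : ℝ :=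
  sSup {t ∈ Icc (0:ℝ) 1 | h t ≤ 1 - p}

lemma distThreshold_mem {h : ℝ → ℝ} (hdist : IsDistortionFn h) {p : ℝ}
    (hp : p ∈ Ioo (0:ℝ) 1) : distThreshold h p ∈ Ico (0:ℝ) 1 := by
  obtain ⟨hmono, hlc, h0, h1, hmaps⟩ := hdist
  have h0T : (0:ℝ) ∈ {t ∈ Icc (0:ℝ) 1 | h t ≤ 1 - p} :=
    ⟨⟨le_rfl, zero_le_one⟩, by rw [h0]; linarith [hp.2]⟩
  have hne : {t ∈ Icc (0:ℝ) 1 | h t ≤ 1 - p}.Nonempty := ⟨0, h0T⟩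
  have hbdd : BddAbove {t ∈ Icc (0:ℝ) 1 | h t ≤ 1 - p} := ⟨1, fun t ht => ht.1.2⟩
  have hs0 : 0 ≤ distThreshold h p := le_csSup hbdd h0T
  have hs1 : distThreshold h p ≤ 1 := csSup_le hne fun t ht => ht.1.2
  refine ⟨hs0, lt_of_le_of_ne hs1 ?_⟩
  intro hseq
  by_cases h1T : (1:ℝ) ∈ {t ∈ Icc (0:ℝ) 1 | h t ≤ 1 - p}
  · have := h1T.2; rw [h1] at this; linarith [hp.1]
  · have hsub : {t ∈ Icc (0:ℝ) 1 | h t ≤ 1 - p} ⊆ Iio 1 := by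
      intro t ht
      exact lt_of_le_of_ne ht.1.2 (fun he => h1T (he ▸ ht))
    have hcl : (1:ℝ) ∈ closure {t ∈ Icc (0:ℝ) 1 | h t ≤ 1 - p} := by
      have := csSup_mem_closure hne hbdd
      rwa [show sSup {t ∈ Icc (0:ℝ) 1 | h t ≤ 1 - p} = 1 from hseq] at this
    have hnb : (𝓝[{t ∈ Icc (0:ℝ) 1 | h t ≤ 1 - p}] (1:ℝ)).NeBot :=
      mem_closure_iff_nhdsWithin_neBot.mp hcl
    have htend : Tendsto h (𝓝[{t ∈ Icc (0:ℝ) 1 | h t ≤ 1 - p}] (1:ℝ)) (𝓝 (h 1)) :=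
      (hlc 1 ⟨zero_lt_one, le_rfl⟩).mono_left (nhdsWithin_mono _ hsub)
    have hev : ∀ᶠ t in 𝓝[{t ∈ Icc (0:ℝ) 1 | h t ≤ 1 - p}] (1:ℝ), h t ≤ 1 - p := by
      filter_upwards [self_mem_nhdsWithin] with t ht using ht.2
    have := le_of_tendsto htend hev
    rw [h1] at this
    linarith [hp.1]

lemma quantile_distorted {F h : ℝ → ℝ} (hF : IsNonnegCDF F) (hFcont : Continuous F)
    (hFstrict : StrictMonoOn F (Ici 0)) (hdist : IsDistortionFn h) {p : ℝ}
    (hp : p ∈ Ioo (0:ℝ) 1) :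
    quantile (distortedCDF h F) p = quantile F (1 - distThreshold h p) := by
  obtain ⟨hmono, hlc, h0, h1, hmaps⟩ := hdist
  set s := distThreshold h p with hs
  set w := 1 - s with hw
  have hsmem : s ∈ Ico (0:ℝ) 1 := distThreshold_mem ⟨hmono, hlc, h0, h1, hmaps⟩ hp
  have hw01 : 0 < w ∧ w ≤ 1 := ⟨by simp [hw]; linarith [hsmem.2], by simp [hw]; linarith [hsmem.1]⟩
  have hbddT : BddAbove {t ∈ Icc (0:ℝ) 1 | h t ≤ 1 - p} := ⟨1, fun t ht => ht.1.2⟩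
  have hneT : {t ∈ Icc (0:ℝ) 1 | h t ≤ 1 - p}.Nonempty :=
    ⟨0, ⟨le_rfl, zero_le_one⟩, by rw [h0]; linarith [hp.2]⟩
  -- inclusion 1
  have incl1 : ∀ x : ℝ, p ≤ distortedCDF h F x → w ≤ F x := by
    intro x hx
    have hFx : 1 - F x ∈ {t ∈ Icc (0:ℝ) 1 | h t ≤ 1 - p} := by
      refine ⟨⟨by linarith [cdf_lt_one hF hFstrict x], by linarith [cdf_nonneg hF x]⟩, ?_⟩
      simp only [distortedCDF] at hx
      linarith
    have : 1 - F x ≤ s := le_csSup hbddT hFx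
    linarith
  -- inclusion 2
  have incl2 : ∀ x : ℝ, w < F x → p ≤ distortedCDF h F x := by
    intro x hx
    have hlt : 1 - F x < s := by linarith
    obtain ⟨t, htT, htlt⟩ := exists_lt_of_lt_csSup hneT hlt
    have hm : h (1 - F x) ≤ h t := by
      refine hmono ⟨by linarith [cdf_lt_one hF hFstrict x], by linarith [cdf_nonneg hF x]⟩
        htT.1 (le_of_lt htlt)
    simp only [distortedCDF]
    linarith [htT.2]
  by_cases hw1 : w = 1
  · -- both quantiles are sInf of the empty set
    have hA : {x : ℝ | p ≤ distortedCDF h F x} = ∅ := by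
      ext x
      simp only [mem_setOf_eq, mem_empty_iff_false, iff_false, not_le]
      by_contra hc
      push_neg at hc
      have := incl1 x hc
      rw [hw1] at this
      exact absurd (cdf_lt_one hF hFstrict x) (not_lt.mpr this)
    rw [hw1, quantile_one hF hFstrict, quantile, hA, Real.sInf_empty]
  · have hwIoo : w ∈ Ioo (0:ℝ) 1 := ⟨hw01.1, lt_of_le_of_ne hw01.2 hw1⟩
    set q := quantile F w with hq
    have hFq : F q = w := cdf_quantile hF hFcont hwIoo
    have hqpos : 0 < q := (quantile_mem hF hFcont hwIoo).2
    have hlb : ∀ x ∈ {x : ℝ | p ≤ distortedCDF h F x}, q ≤ x := by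
      intro x hx
      by_contra hxq
      push_neg at hxq
      exact absurd (incl1 x hx) (not_le.mpr (lt_quantile_imp hF hwIoo.1 hxq))
    have hAne : {x : ℝ | p ≤ distortedCDF h F x}.Nonempty := by
      refine ⟨q + 1, incl2 _ ?_⟩
      rw [← hFq]
      exact hFstrict (mem_Ici.mpr hqpos.le) (mem_Ici.mpr (by linarith)) (by linarith)
    refine le_antisymm ?_ (le_csInf hAne hlb)
    refine le_of_forall_pos_le_add fun ε hε => ?_
    have hqε : q + ε ∈ {x : ℝ | p ≤ distortedCDF h F x} := by
      refine incl2 _ ?_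
      rw [← hFq]
      exact hFstrict (mem_Ici.mpr hqpos.le) (mem_Ici.mpr (by linarith)) (by linarith)
    exact csInf_le ⟨q, hlb⟩ hqε

noncomputable def survC (F : ℝ → ℝ) (x : ℝ) : ℝ := 1 - F (max x 0)

/-- The starshape factor along the survival function. -/

noncomputable def Kfn (h F : ℝ → ℝ) (x : ℝ) : ℝ := h (survC F x) / survC F x

lemma survC_mem {F : ℝ → ℝ} (hF : IsNonnegCDF F) (hFstrict : StrictMonoOn F (Ici 0))
    (x : ℝ) : survC F x ∈ Ioc (0:ℝ) 1 :=
  ⟨by simp only [survC]; linarith [cdf_lt_one hF hFstrict (max x 0)],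
   by simp only [survC]; linarith [cdf_nonneg hF (max x 0)]⟩

lemma survC_anti {F : ℝ → ℝ} (hF : IsNonnegCDF F) : Antitone (survC F) := by
  intro x y hxy
  simp only [survC]
  have := hF.1 (max_le_max hxy (le_refl 0))
  linarith

lemma survC_eq {F : ℝ → ℝ} {x : ℝ} (hx : 0 < x) : survC F x = 1 - F x := by
  simp [survC, max_eq_left hx.le]

lemma Kfn_anti {h F : ℝ → ℝ} (hF : IsNonnegCDF F) (hFstrict : StrictMonoOn F (Ici 0))
    (hstar : Starshaped h) : Antitone (Kfn h F) := by
  intro x y hxy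
  exact hstar (survC_mem hF hFstrict y) (survC_mem hF hFstrict x)
    (survC_anti hF hxy)

lemma Kfn_mem {h F : ℝ → ℝ} (hF : IsNonnegCDF F) (hFstrict : StrictMonoOn F (Ici 0))
    (hdist : IsDistortionFn h) (hstar : Starshaped h) (x : ℝ) :
    Kfn h F x ∈ Icc (0:ℝ) 1 := by
  obtain ⟨hs, hs1⟩ := survC_mem hF hFstrict x
  constructor
  · exact div_nonneg (hdist.2.2.2.2 ⟨hs.le, hs1⟩).1 hs.le
  · have := hstar ⟨hs, hs1⟩ ⟨zero_lt_one, le_rfl⟩ hs1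
    simpa [Kfn, hdist.2.2.2.1] using this

lemma Kfn_measurable {h F : ℝ → ℝ} (hF : IsNonnegCDF F) (hFstrict : StrictMonoOn F (Ici 0))
    (hstar : Starshaped h) : Measurable (Kfn h F) :=
  (Kfn_anti hF hFstrict hstar).measurable

lemma hsurv_anti {h F : ℝ → ℝ} (hF : IsNonnegCDF F) (hFstrict : StrictMonoOn F (Ici 0))
    (hdist : IsDistortionFn h) : Antitone (fun x => h (survC F x)) := by
  intro x y hxy
  have hy := survC_mem hF hFstrict y
  have hx := survC_mem hF hFstrict x
  exact hdist.1 ⟨hy.1.le, hy.2⟩ ⟨hx.1.le, hx.2⟩ (survC_anti hF hxy)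

lemma hsurv_mem {h F : ℝ → ℝ} (hF : IsNonnegCDF F) (hFstrict : StrictMonoOn F (Ici 0))
    (hdist : IsDistortionFn h) (x : ℝ) : h (survC F x) ∈ Icc (0:ℝ) 1 := by
  have hs := survC_mem hF hFstrict x
  exact hdist.2.2.2.2 ⟨hs.1.le, hs.2⟩

/-- The weighted measure `1_{(0,a]}(x) (1-F(x)) dx` where `a = quantile F w`. -/

noncomputable def tttMeasure (F : ℝ → ℝ) (w : ℝ) : Measure ℝ :=
  (volume.restrict (Ioc 0 (quantile F w))).withDensity (fun x => ENNReal.ofReal (1 - F x))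

lemma tttMeasure_apply {F : ℝ → ℝ} {w : ℝ} {E : Set ℝ} (hE : MeasurableSet E) :
    tttMeasure F w E = ∫⁻ x in E ∩ Ioc 0 (quantile F w), ENNReal.ofReal (1 - F x) := by
  rw [tttMeasure, withDensity_apply _ hE, Measure.restrict_restrict hE]

lemma ttt_eq_setIntegral {F : ℝ → ℝ} (hF : IsNonnegCDF F) (hFcont : Continuous F)
    {m : ℝ} (hm : m ∈ Ioo (0:ℝ) 1) :
    tttIntegral F m = ∫ x in Ioc 0 (quantile F m), (1 - F x) := by
  rw [tttIntegral, intervalIntegral.integral_of_le (quantile_mem hF hFcont hm).2.le]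

lemma tttMeasure_finite {F : ℝ → ℝ} (hF : IsNonnegCDF F) (w : ℝ) :
    IsFiniteMeasure (tttMeasure F w) := by
  constructor
  rw [tttMeasure_apply MeasurableSet.univ, univ_inter]
  calc ∫⁻ x in Ioc 0 (quantile F w), ENNReal.ofReal (1 - F x)
      ≤ ∫⁻ _ in Ioc 0 (quantile F w), 1 := by
        refine setLIntegral_mono measurable_const fun x _ => ?_
        rw [ENNReal.ofReal_le_one]
        linarith [cdf_nonneg hF x]
  _ = volume (Ioc 0 (quantile F w)) := by simp
  _ < ⊤ := by simp [Real.volume_Ioc]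

lemma distorted_integral_eq_layers {F h : ℝ → ℝ} (hF : IsNonnegCDF F)
    (hFcont : Continuous F) (hFstrict : StrictMonoOn F (Ici 0))
    (hdist : IsDistortionFn h) (hstar : Starshaped h) (w : ℝ) :
    ENNReal.ofReal (∫ x in Ioc 0 (quantile F w), h (1 - F x)) =
      ∫⁻ c in Ioi (0:ℝ), tttMeasure F w {x | c < Kfn h F x} := by
  haveI := tttMeasure_finite hF w
  have hKmeas : Measurable (Kfn h F) := Kfn_measurable hF hFstrict hstar
  have hKnn : (0:ℝ → ℝ) ≤ᵐ[tttMeasure F w] Kfn h F :=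
    Filter.Eventually.of_forall fun x => (Kfn_mem hF hFstrict hdist hstar x).1
  have LC := lintegral_eq_lintegral_meas_lt (tttMeasure F w) hKnn hKmeas.aemeasurable
  rw [← LC]
  -- compute the lintegral of Kfn against tttMeasure
  have hdens : Measurable (fun x => ENNReal.ofReal (1 - F x)) :=
    ENNReal.measurable_ofReal.comp (continuous_const.sub hFcont).measurable
  have hKof : Measurable (fun x => ENNReal.ofReal (Kfn h F x)) :=
    ENNReal.measurable_ofReal.comp hKmeas
  rw [tttMeasure, lintegral_withDensity_eq_lintegral_mul _ hdens hKof]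
  have hcongr : ∫⁻ x in Ioc 0 (quantile F w),
      ((fun x => ENNReal.ofReal (1 - F x)) * fun x => ENNReal.ofReal (Kfn h F x)) x
      = ∫⁻ x in Ioc 0 (quantile F w), ENNReal.ofReal (h (1 - F x)) := by
    refine setLIntegral_congr_fun measurableSet_Ioc ?_
    intro x hx
    have hsurv : survC F x = 1 - F x := survC_eq hx.1
    have hne : 1 - F x ≠ 0 := by
      have := cdf_lt_one hF hFstrict x; intro hc; linarith
    simp only [Pi.mul_apply]
    rw [← ENNReal.ofReal_mul (by linarith [cdf_lt_one hF hFstrict x])]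
    congr 1
    rw [Kfn, hsurv]
    field_simp
  rw [hcongr]
  -- convert real integral to lintegral
  have hint : IntegrableOn (fun x => h (1 - F x)) (Ioc 0 (quantile F w)) volume := by
    have hmeas : Measurable (fun x => h (survC F x)) :=
      (hsurv_anti hF hFstrict hdist).measurable
    have : IntegrableOn (fun x => h (survC F x)) (Ioc 0 (quantile F w)) volume := by
      refine ((integrableOn_const_iff (C := (1:ℝ))).mpr
          (Or.inr (by simp [Real.volume_Ioc]))).mono'
        hmeas.aestronglyMeasurable (Filter.Eventually.of_forall fun x => ?_)
      have := hsurv_mem hF hFstrict hdist x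
      rw [Real.norm_eq_abs, abs_le]
      exact ⟨by linarith [this.1], this.2⟩
    refine this.congr_fun (fun x hx => ?_) measurableSet_Ioc
    dsimp only
    rw [survC_eq hx.1]
  rw [ofReal_integral_eq_lintegral_ofReal hint ?nn]
  case nn =>
    filter_upwards [ae_restrict_mem measurableSet_Ioc] with x hx
    have := hsurv_mem hF hFstrict hdist x
    rw [survC_eq hx.1] at this
    simpa using this.1

lemma layer_le {F G h : ℝ → ℝ}
    (hF : IsNonnegCDF F) (hG : IsNonnegCDF G)
    (hFcont : Continuous F) (hGcont : Continuous G)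
    (hFstrict : StrictMonoOn F (Ici 0)) (hGstrict : StrictMonoOn G (Ici 0))
    (hFmean : IntegrableOn (fun x => 1 - F x) (Ioi 0) volume)
    (hGmean : IntegrableOn (fun x => 1 - G x) (Ioi 0) volume)
    (hdist : IsDistortionFn h) (hstar : Starshaped h) (hle : TTT_le F G)
    {w : ℝ} (hw : w ∈ Ioo (0:ℝ) 1) {c : ℝ} (hc : 0 < c) :
    tttMeasure F w {x | c < Kfn h F x} ≤ tttMeasure G w {x | c < Kfn h G x} := by
  have hKFmeas := Kfn_measurable hF hFstrict hstar
  have hKGmeas := Kfn_measurable hG hGstrict hstar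
  have hlF : MeasurableSet {x : ℝ | c < Kfn h F x} := measurableSet_lt measurable_const hKFmeas
  have hlG : MeasurableSet {x : ℝ | c < Kfn h G x} := measurableSet_lt measurable_const hKGmeas
  rw [tttMeasure_apply hlF, tttMeasure_apply hlG]
  by_cases hS : {t ∈ Ioc (0:ℝ) 1 | c < h t / t}.Nonempty
  case neg =>
    -- the layer set is empty
    have hemp : {x : ℝ | c < Kfn h F x} = ∅ := by
      ext x
      simp only [mem_setOf_eq, mem_empty_iff_false, iff_false, not_lt]
      by_contra hcx
      push_neg at hcx
      exact hS ⟨survC F x, survC_mem hF hFstrict x, hcx⟩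
    rw [hemp, empty_inter]
    simp
  case pos =>
    obtain ⟨t0, ht0⟩ := hS
    have hbddS : BddBelow {t ∈ Ioc (0:ℝ) 1 | c < h t / t} := ⟨0, fun t ht => ht.1.1.le⟩
    set tc := sInf {t ∈ Ioc (0:ℝ) 1 | c < h t / t} with htc
    have htc_lb : ∀ x : ℝ, c < Kfn h F x → tc ≤ survC F x := fun x hx =>
      csInf_le hbddS ⟨survC_mem hF hFstrict x, hx⟩
    by_cases hu : 1 - tc ≤ 0
    case pos =>
      have hemp : {x : ℝ | c < Kfn h F x} ∩ Ioc 0 (quantile F w) = ∅ := by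
        ext x
        simp only [mem_inter_iff, mem_setOf_eq, mem_Ioc, mem_empty_iff_false, iff_false]
        rintro ⟨hcx, hx0, -⟩
        have h1 := htc_lb x hcx
        rw [survC_eq hx0] at h1
        have h2 : 0 < F x := by
          have := hFstrict (le_refl (0:ℝ)) hx0.le hx0
          rwa [hF.2.1 0 le_rfl] at this
        linarith
      rw [hemp]
      simp
    case neg =>
      push_neg at hu
      set u := 1 - tc with hudef
      set m := min u w with hm
      have hmIoo : m ∈ Ioo (0:ℝ) 1 := ⟨lt_min hu hw.1, (min_le_right u w).trans_lt hw.2⟩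
      have ham := quantile_mem hF hFcont hmIoo
      have hbm := quantile_mem hG hGcont hmIoo
      -- upper bound for the F side
      have hsubF : {x : ℝ | c < Kfn h F x} ∩ Ioc 0 (quantile F w) ⊆
          Ioc 0 (quantile F m) := by
        rintro x ⟨hxl, hx0, hxa⟩
        refine ⟨hx0, ?_⟩
        have hFxu : F x ≤ u := by
          have := htc_lb x hxl
          rw [survC_eq hx0] at this
          simp only [hudef]
          linarith
        by_contra hgt
        push_neg at hgt
        have hlt : F (quantile F m) < F x :=
          hFstrict ham.2.le (le_trans ham.2.le hgt.le) hgt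
        rw [cdf_quantile hF hFcont hmIoo] at hlt
        rcases le_total u w with huw | hwu
        · rw [hm, min_eq_left huw] at hlt; linarith
        · rw [hm, min_eq_right hwu] at hlt
          have hFxw : F x ≤ w := by
            have := hF.1 hxa
            rwa [cdf_quantile hF hFcont hw] at this
          linarith
      -- lower bound for the G side
      have hsubG : Ioo 0 (quantile G m) ⊆
          {x : ℝ | c < Kfn h G x} ∩ Ioc 0 (quantile G w) := by
        rintro x ⟨hx0, hxb⟩
        have hGx : G x < m := by
          rw [← cdf_quantile hG hGcont hmIoo]
          exact hGstrict hx0.le hbm.2.le hxb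
        constructor
        · show c < Kfn h G x
          have hsurv : survC G x = 1 - G x := survC_eq hx0
          have hgt : tc < survC G x := by
            rw [hsurv]
            have : m ≤ u := min_le_left u w
            simp only [hudef] at this ⊢
            linarith
          obtain ⟨t, htS, htlt⟩ := exists_lt_of_csInf_lt ⟨t0, ht0⟩ hgt
          calc c < h t / t := htS.2
          _ ≤ Kfn h G x := hstar htS.1 (survC_mem hG hGstrict x) htlt.le
        · refine ⟨hx0, hxb.le.trans ?_⟩
          by_contra hba
          push_neg at hba
          have := hGstrict (quantile_mem hG hGcont hw).2.le hbm.2.le hba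
          rw [cdf_quantile hG hGcont hmIoo, cdf_quantile hG hGcont hw] at this
          exact absurd (min_le_right u w) (not_le.mpr this)
      calc ∫⁻ x in {x : ℝ | c < Kfn h F x} ∩ Ioc 0 (quantile F w), ENNReal.ofReal (1 - F x)
          ≤ ∫⁻ x in Ioc 0 (quantile F m), ENNReal.ofReal (1 - F x) :=
            lintegral_mono_set hsubF
      _ = ENNReal.ofReal (tttIntegral F m) := by
            rw [ttt_eq_setIntegral hF hFcont hmIoo,
              ofReal_integral_eq_lintegral_ofReal
                (hFmean.mono_set Ioc_subset_Ioi_self)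
                (Filter.Eventually.of_forall fun x => by
                  simp only [Pi.zero_apply]; linarith [cdf_le_one hF x])]
      _ ≤ ENNReal.ofReal (tttIntegral G m) := ENNReal.ofReal_le_ofReal (hle m hmIoo)
      _ = ∫⁻ x in Ioc 0 (quantile G m), ENNReal.ofReal (1 - G x) := by
            rw [ttt_eq_setIntegral hG hGcont hmIoo,
              ofReal_integral_eq_lintegral_ofReal
                (hGmean.mono_set Ioc_subset_Ioi_self)
                (Filter.Eventually.of_forall fun x => by
                  simp only [Pi.zero_apply]; linarith [cdf_le_one hG x])]
      _ = ∫⁻ x in Ioo 0 (quantile G m), ENNReal.ofReal (1 - G x) := by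
            rw [restrict_Ioo_eq_restrict_Ioc]
      _ ≤ ∫⁻ x in {x : ℝ | c < Kfn h G x} ∩ Ioc 0 (quantile G w), ENNReal.ofReal (1 - G x) :=
            lintegral_mono_set hsubG

lemma stepC {F G h : ℝ → ℝ}
    (hF : IsNonnegCDF F) (hG : IsNonnegCDF G)
    (hFcont : Continuous F) (hGcont : Continuous G)
    (hFstrict : StrictMonoOn F (Ici 0)) (hGstrict : StrictMonoOn G (Ici 0))
    (hFmean : IntegrableOn (fun x => 1 - F x) (Ioi 0) volume)
    (hGmean : IntegrableOn (fun x => 1 - G x) (Ioi 0) volume)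
    (hdist : IsDistortionFn h) (hstar : Starshaped h) (hle : TTT_le F G)
    {w : ℝ} (hw : w ∈ Ioo (0:ℝ) 1) :
    ∫ x in Ioc 0 (quantile F w), h (1 - F x) ≤ ∫ x in Ioc 0 (quantile G w), h (1 - G x) := by
  have hrhs_nn : 0 ≤ ∫ x in Ioc 0 (quantile G w), h (1 - G x) := by
    refine setIntegral_nonneg measurableSet_Ioc fun x hx => ?_
    have := hsurv_mem hG hGstrict hdist x
    rw [survC_eq hx.1] at this
    exact this.1
  rw [← ENNReal.ofReal_le_ofReal_iff hrhs_nn,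
    distorted_integral_eq_layers hF hFcont hFstrict hdist hstar w,
    distorted_integral_eq_layers hG hGcont hGstrict hdist hstar w]
  exact setLIntegral_mono' measurableSet_Ioi fun c hc =>
    layer_le hF hG hFcont hGcont hFstrict hGstrict hFmean hGmean hdist hstar hle hw hc

end Helpers

/-- **Theorem 2 (preservation of the ttt order).**
If `X ≤_ttt Y` (nonnegative continuous random variables with finite means and strictly
increasing distribution functions `F`, `G`), then `X_h ≤_ttt Y_h` for every starshaped
distortion function `h`. -/
theorem ttt_preserved_by_starshaped_distortion
    (F G h : ℝ → ℝ)
    (hF : IsNonnegCDF F) (hG : IsNonnegCDF G)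
    (hFcont : Continuous F) (hGcont : Continuous G)
    (hFstrict : StrictMonoOn F (Ici 0)) (hGstrict : StrictMonoOn G (Ici 0))
    (hFmean : IntegrableOn (fun x => 1 - F x) (Ioi 0) volume)
    (hGmean : IntegrableOn (fun x => 1 - G x) (Ioi 0) volume)
    (hdist : IsDistortionFn h) (hstar : Starshaped h)
    (hle : TTT_le F G) :
    TTT_le (distortedCDF h F) (distortedCDF h G) := by
  intro p hp
  have hsmem := distThreshold_mem hdist hp
  have hqF := quantile_distorted hF hFcont hFstrict hdist hp
  have hqG := quantile_distorted hG hGcont hGstrict hdist hp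
  rw [tttIntegral, tttIntegral, hqF, hqG]
  simp only [distortedCDF, sub_sub_cancel]
  by_cases hw1 : 1 - distThreshold h p = 1
  · rw [hw1, quantile_one hF hFstrict, quantile_one hG hGstrict]
    simp
  · have hwIoo : 1 - distThreshold h p ∈ Ioo (0:ℝ) 1 :=
      ⟨by linarith [hsmem.2], lt_of_le_of_ne (by linarith [hsmem.1]) hw1⟩
    rw [intervalIntegral.integral_of_le (quantile_mem hF hFcont hwIoo).2.le,
      intervalIntegral.integral_of_le (quantile_mem hG hGcont hwIoo).2.le]
    exact stepC hF hG hFcont hGcont hFstrict hGstrict hFmean hGmean hdist hstar hle hwIoo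
end

section
/- Let X and Y be nonnegative absolutely continuous random variables with finite means, strictly increasing distribution functions F and G, and density functions f and g satisfying f(F^{-1}(p)) > 0 and g(G^{-1}(p)) > 0 for all p ∈ (0,1). Then X ≤_dmrl Y if and only if, for all 0 < p ≤ q < 1, (1/g(G^{-1}(p)))·∫_q^1 (1−t)/f(F^{-1}(t)) dt ≤ (1/f(F^{-1}(p)))·∫_q^1 (1−t)/g(G^{-1}(t)) dt. -/
open MeasureTheory Set Filter

section myAux
variable {F f : ℝ → ℝ}

lemma my_F_le_one (hF : IsNonnegCDF F) (x : ℝ) : F x ≤ 1 :=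
  hF.1.ge_of_tendsto hF.2.2 x

lemma my_F_lt_one (hF : IsNonnegCDF F) (hFs : StrictMonoOn F (Ici 0)) (x : ℝ) : F x < 1 := by
  rcases le_or_gt x 0 with h | h
  · rw [hF.2.1 x h]; norm_num
  · rcases lt_or_ge (F x) 1 with h1 | h1
    · exact h1
    · exfalso
      have h2 : F x < F (x + 1) := hFs (mem_Ici.mpr h.le) (mem_Ici.mpr (by linarith)) (by linarith)
      have := my_F_le_one hF (x + 1)
      linarith

lemma quantile_mem_le (hF : IsNonnegCDF F) {p y : ℝ} (hp : 0 < p) (h : p ≤ F y) :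
    quantile F p ≤ y := by
  unfold quantile
  refine csInf_le ⟨0, fun x hx => ?_⟩ (show y ∈ {x : ℝ | p ≤ F x} from h)
  by_contra hc
  push_neg at hc
  have := hF.2.1 x hc.le
  simp only [mem_setOf_eq] at hx
  linarith

lemma quantile_spec (hF : IsNonnegCDF F) (hFc : Continuous F) {p : ℝ} (hp : p ∈ Ioo (0:ℝ) 1) :
    0 < quantile F p ∧ F (quantile F p) = p := by
  obtain ⟨hp0, hp1⟩ := hp
  set S := {x : ℝ | p ≤ F x} with hS
  have hne : S.Nonempty := by
    obtain ⟨x, hx⟩ := (hF.2.2.eventually (eventually_ge_nhds hp1)).exists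
    exact ⟨x, hx⟩
  have hbdd : BddBelow S := by
    refine ⟨0, fun x hx => ?_⟩
    by_contra hc
    push_neg at hc
    have := hF.2.1 x hc.le
    simp only [hS, mem_setOf_eq] at hx
    linarith
  have hcl : IsClosed S := isClosed_le continuous_const hFc
  have hmem : quantile F p ∈ S := hcl.csInf_mem hne hbdd
  simp only [hS, mem_setOf_eq] at hmem
  have hQpos : 0 < quantile F p := by
    by_contra hc
    push_neg at hc
    have := hF.2.1 _ hc
    linarith
  refine ⟨hQpos, le_antisymm ?_ hmem⟩
  by_contra hc
  push_neg at hc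
  have ev : ∀ᶠ x in nhds (quantile F p), p < F x :=
    (hFc.tendsto (quantile F p)).eventually (eventually_gt_nhds hc)
  have ev' : ∀ᶠ x in nhdsWithin (quantile F p) (Iio (quantile F p)), p < F x :=
    ev.filter_mono nhdsWithin_le_nhds
  obtain ⟨x, hx1, hx2⟩ := (ev'.and (eventually_mem_nhdsWithin)).exists
  have : quantile F p ≤ x := quantile_mem_le hF hp0 hx1.le
  exact absurd hx2 (not_lt.2 this)

lemma quantile_mono (hF : IsNonnegCDF F) (hFc : Continuous F) {p q : ℝ}
    (hp : p ∈ Ioo (0:ℝ) 1) (hq : q ∈ Ioo (0:ℝ) 1) (hpq : p ≤ q) :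
    quantile F p ≤ quantile F q := by
  by_contra hc
  push_neg at hc
  have h1 := (quantile_spec hF hFc hp).2
  have h2 := (quantile_spec hF hFc hq).2
  have := hF.1 hc.le
  rw [h1, h2] at this
  have : p = q := le_antisymm hpq this
  rw [this] at hc
  exact lt_irrefl _ hc

lemma quantile_continuousAt (hF : IsNonnegCDF F) (hFc : Continuous F)
    (hFs : StrictMonoOn F (Ici 0)) {p : ℝ} (hp : p ∈ Ioo (0:ℝ) 1) :
    ContinuousAt (quantile F) p := by
  obtain ⟨hQ0, hQF⟩ := quantile_spec hF hFc hp
  rw [ContinuousAt]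
  rw [tendsto_order]
  constructor
  · intro l hl
    rcases lt_or_ge l 0 with h0 | h0
    · filter_upwards [Ioo_mem_nhds hp.1 hp.2] with y hy
      exact lt_of_lt_of_le h0 (quantile_spec hF hFc hy).1.le
    · have hFl : F l < p := by
        have := hFs (mem_Ici.mpr h0) (mem_Ici.mpr hQ0.le) hl
        rwa [hQF] at this
      filter_upwards [Ioo_mem_nhds hp.1 hp.2, eventually_gt_nhds hFl] with y hy hy2
      by_contra hc
      push_neg at hc
      have := hF.1 hc
      rw [(quantile_spec hF hFc hy).2] at this
      linarith
  · intro u hu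
    set u' := (quantile F p + u) / 2 with hu'
    have h1 : quantile F p < u' := by rw [hu']; linarith
    have h2 : u' < u := by rw [hu']; linarith
    have hFu : p < F u' := by
      have := hFs (mem_Ici.mpr hQ0.le) (mem_Ici.mpr (by linarith)) h1
      rwa [hQF] at this
    filter_upwards [Ioo_mem_nhds hp.1 hp.2, eventually_lt_nhds hFu] with y hy hy2
    exact lt_of_le_of_lt (quantile_mem_le hF hy.1 hy2.le) h2

lemma quantile_hasDerivAt (hF : IsNonnegCDF F) (hFc : Continuous F)
    (hFs : StrictMonoOn F (Ici 0)) (hfd : ∀ x : ℝ, HasDerivAt F (f x) x)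
    {p : ℝ} (hp : p ∈ Ioo (0:ℝ) 1) (hfp : 0 < f (quantile F p)) :
    HasDerivAt (quantile F) ((f (quantile F p))⁻¹) p := by
  refine HasDerivAt.of_local_left_inverse (quantile_continuousAt hF hFc hFs hp)
    (hfd (quantile F p)) (ne_of_gt hfp) ?_
  filter_upwards [Ioo_mem_nhds hp.1 hp.2] with y hy
  exact (quantile_spec hF hFc hy).2

lemma tail_split (hFmean : IntegrableOn (fun x => 1 - F x) (Ioi 0) volume)
    {a b : ℝ} (ha : 0 < a) (hab : a ≤ b) :
    ∫ x in Ioi a, (1 - F x) = (∫ x in a..b, (1 - F x)) + ∫ x in Ioi b, (1 - F x) := by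
  rw [intervalIntegral.integral_of_le hab]
  rw [← setIntegral_union (Ioc_disjoint_Ioi le_rfl) measurableSet_Ioi
    (hFmean.mono_set (fun x hx => lt_of_lt_of_le ha hx.1.le))
    (hFmean.mono_set (Ioi_subset_Ioi (le_of_lt (lt_of_lt_of_le ha hab))))]
  rw [Ioc_union_Ioi_eq_Ioi hab]

lemma ew_hasDerivAt (hF : IsNonnegCDF F) (hFc : Continuous F)
    (hFs : StrictMonoOn F (Ici 0)) (hfd : ∀ x : ℝ, HasDerivAt F (f x) x)
    (hFmean : IntegrableOn (fun x => 1 - F x) (Ioi 0) volume)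
    {p : ℝ} (hp : p ∈ Ioo (0:ℝ) 1) (hfp : 0 < f (quantile F p)) :
    HasDerivAt (ewIntegral F) (-((1 - p) / f (quantile F p))) p := by
  obtain ⟨hQ0, hQF⟩ := quantile_spec hF hFc hp
  set b := quantile F p with hb
  set ψ : ℝ → ℝ := fun u => ∫ x in Ioi u, (1 - F x) with hψ
  have hsub : Continuous fun x => 1 - F x := continuous_const.sub hFc
  -- ψ equals a nice function near b
  have hrep : ∀ u ∈ Ioi (0:ℝ), ψ u = ψ b - ∫ x in b..u, (1 - F x) := by
    intro u hu
    rcases le_total b u with h | h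
    · rw [hψ]
      simp only
      rw [tail_split hFmean hQ0 h]
      ring
    · rw [hψ]
      simp only
      rw [tail_split hFmean hu h, intervalIntegral.integral_symm]
      ring
  have hD1 : HasDerivAt (fun u => ψ b - ∫ x in b..u, (1 - F x)) (-(1 - F b)) b := by
    have := (intervalIntegral.integral_hasDerivAt_right
      ((hsub.intervalIntegrable b b))
      (hsub.stronglyMeasurableAtFilter _ _) hsub.continuousAt)
    exact ((hasDerivAt_const b (ψ b)).sub this).congr_deriv (by simp)
  have hD2 : HasDerivAt ψ (-(1 - F b)) b := by
    refine hD1.congr_of_eventuallyEq ?_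
    filter_upwards [Ioi_mem_nhds hQ0] with u hu
    exact hrep u hu
  have hQd : HasDerivAt (quantile F) ((f b)⁻¹) p :=
    quantile_hasDerivAt hF hFc hFs hfd hp hfp
  have := hD2.comp p hQd
  have heq : ewIntegral F = ψ ∘ quantile F := rfl
  rw [heq]
  exact this.congr_deriv (by rw [hQF]; ring)

lemma ew_antitoneOn (hF : IsNonnegCDF F) (hFc : Continuous F)
    (hFmean : IntegrableOn (fun x => 1 - F x) (Ioi 0) volume) :
    AntitoneOn (ewIntegral F) (Ioo (0:ℝ) 1) := by
  intro p hp q hq hpq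
  apply setIntegral_mono_set
    (hFmean.mono_set (Ioi_subset_Ioi (quantile_spec hF hFc hp).1.le))
  · filter_upwards with x
    simp only [Pi.zero_apply]
    exact sub_nonneg.2 (my_F_le_one hF x)
  · exact HasSubset.Subset.eventuallyLE (Ioi_subset_Ioi (quantile_mono hF hFc hp hq hpq))

lemma ew_pos (hF : IsNonnegCDF F) (hFc : Continuous F) (hFs : StrictMonoOn F (Ici 0))
    (hFmean : IntegrableOn (fun x => 1 - F x) (Ioi 0) volume)
    {p : ℝ} (hp : p ∈ Ioo (0:ℝ) 1) : 0 < ewIntegral F p := by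
  set b := quantile F p with hb
  have hQ0 : 0 < b := (quantile_spec hF hFc hp).1
  have hInt : IntegrableOn (fun x => 1 - F x) (Ioi b) volume :=
    hFmean.mono_set (Ioi_subset_Ioi hQ0.le)
  have h1 : 0 < 1 - F (b + 1) := sub_pos.2 (my_F_lt_one hF hFs (b + 1))
  have e1 : ∫ _x in Ioc b (b+1), (1 - F (b+1)) ∂volume = 1 - F (b+1) := by
    rw [setIntegral_const]
    simp [Real.volume_Ioc]
  have e2 : ∫ _x in Ioc b (b+1), (1 - F (b+1)) ∂volume ≤ ∫ x in Ioc b (b+1), (1 - F x) := by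
    apply setIntegral_mono_on (integrableOn_const (by simp [Real.volume_Ioc]))
      (hInt.mono_set Ioc_subset_Ioi_self) measurableSet_Ioc
    intro x hx
    exact sub_le_sub_left (hF.1 hx.2) 1
  have e3 : ∫ x in Ioc b (b+1), (1 - F x) ≤ ∫ x in Ioi b, (1 - F x) := by
    apply setIntegral_mono_set hInt
    · filter_upwards with x
      simp only [Pi.zero_apply]
      exact sub_nonneg.2 (my_F_le_one hF x)
    · exact HasSubset.Subset.eventuallyLE Ioc_subset_Ioi_self
  have : 0 < ∫ x in Ioi b, (1 - F x) := by linarith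
  exact this

lemma tail_small (hF : IsNonnegCDF F)
    (hFmean : IntegrableOn (fun x => 1 - F x) (Ioi 0) volume) {ε : ℝ} (hε : 0 < ε) :
    ∃ u : ℝ, 1 ≤ u ∧ ∫ x in Ioi u, (1 - F x) < ε := by
  have hsets : ∀ n : ℕ, MeasurableSet (Ioc (1:ℝ) (1 + n)) := fun n => measurableSet_Ioc
  have hmono : Monotone fun n : ℕ => Ioc (1:ℝ) (1 + n) := by
    intro m n hmn
    have : (m:ℝ) ≤ n := Nat.cast_le.2 hmn
    exact Ioc_subset_Ioc le_rfl (by linarith)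
  have hunion : (⋃ n : ℕ, Ioc (1:ℝ) (1 + n)) = Ioi 1 := by
    ext x
    simp only [mem_iUnion, mem_Ioc, mem_Ioi]
    constructor
    · rintro ⟨n, h1, _⟩; exact h1
    · intro h1
      obtain ⟨n, hn⟩ := exists_nat_ge (x - 1)
      exact ⟨n, h1, by linarith⟩
  have hint : IntegrableOn (fun x => 1 - F x) (Ioi 1) volume :=
    hFmean.mono_set (Ioi_subset_Ioi zero_le_one)
  have := tendsto_setIntegral_of_monotone hsets hmono (by rwa [hunion])
  rw [hunion] at this
  have hlim : Tendsto (fun n : ℕ => ∫ x in Ioi (1 + (n:ℝ)), (1 - F x)) atTop (nhds 0) := by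
    have heq : ∀ n : ℕ, ∫ x in Ioi (1 + (n:ℝ)), (1 - F x) =
        (∫ x in Ioi (1:ℝ), (1 - F x)) - ∫ x in Ioc (1:ℝ) (1 + n), (1 - F x) := by
      intro n
      have h1 : (1:ℝ) ≤ 1 + n := by simp [Nat.cast_nonneg]
      rw [tail_split hFmean one_pos h1, intervalIntegral.integral_of_le h1]
      ring
    simp only [heq]
    have := this.const_sub (∫ x in Ioi (1:ℝ), (1 - F x))
    simpa using this
  have := (hlim.eventually (eventually_lt_nhds hε)).exists
  obtain ⟨n, hn⟩ := this
  exact ⟨1 + n, by simp [Nat.cast_nonneg], hn⟩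

lemma ew_tendsto (hF : IsNonnegCDF F) (hFc : Continuous F) (hFs : StrictMonoOn F (Ici 0))
    (hFmean : IntegrableOn (fun x => 1 - F x) (Ioi 0) volume) :
    Tendsto (ewIntegral F) (nhdsWithin 1 (Iio (1:ℝ))) (nhds 0) := by
  rw [tendsto_order]
  have hIoo : Ioo (0:ℝ) 1 ∈ nhdsWithin 1 (Iio (1:ℝ)) := by
    rw [mem_nhdsWithin]
    exact ⟨Ioi 0, isOpen_Ioi, mem_Ioi.mpr one_pos, fun x hx => ⟨hx.1, hx.2⟩⟩
  constructor
  · intro l hl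
    filter_upwards [hIoo] with y hy
    exact lt_of_lt_of_le hl (ew_pos hF hFc hFs hFmean hy).le
  · intro u hu
    obtain ⟨v, hv1, hv2⟩ := tail_small hF hFmean hu
    -- pick r₀ := F v ∈ (0,1); for r > r₀, quantile F r ≥ v
    have hv0 : (0:ℝ) < v := lt_of_lt_of_le one_pos hv1
    have hFv0 : 0 < F v := by
      have := hFs (mem_Ici.mpr le_rfl) (mem_Ici.mpr hv0.le) hv0
      rwa [hF.2.1 0 le_rfl] at this
    have hFv1 : F v < 1 := my_F_lt_one hF hFs v
    have hIoo2 : Ioo (F v) 1 ∈ nhdsWithin 1 (Iio (1:ℝ)) := by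
      rw [mem_nhdsWithin]
      exact ⟨Ioi (F v), isOpen_Ioi, mem_Ioi.mpr hFv1, fun x hx => ⟨hx.1, hx.2⟩⟩
    filter_upwards [hIoo2, hIoo] with y hy hy2
    -- quantile F y ≥ v
    have hq : v ≤ quantile F y := by
      by_contra hc
      push_neg at hc
      have := hF.1 hc.le
      rw [(quantile_spec hF hFc hy2).2] at this
      exact absurd hy.1 (not_lt.2 this)
    have hle : ewIntegral F y ≤ ∫ x in Ioi v, (1 - F x) := by
      apply setIntegral_mono_set (hFmean.mono_set (Ioi_subset_Ioi hv0.le))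
      · filter_upwards with x
        simp only [Pi.zero_apply]
        exact sub_nonneg.2 (my_F_le_one hF x)
      · exact HasSubset.Subset.eventuallyLE (Ioi_subset_Ioi hq)
    exact lt_of_le_of_lt hle hv2

lemma ew_repr (hF : IsNonnegCDF F) (hFc : Continuous F)
    (hFs : StrictMonoOn F (Ici 0)) (hfd : ∀ x : ℝ, HasDerivAt F (f x) x)
    (hFmean : IntegrableOn (fun x => 1 - F x) (Ioi 0) volume)
    (hfpos : ∀ p ∈ Ioo (0:ℝ) 1, 0 < f (quantile F p))
    {q : ℝ} (hq : q ∈ Ioo (0:ℝ) 1) :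
    ∫ t in q..1, (1 - t) / f (quantile F t) = ewIntegral F q := by
  set φ : ℝ → ℝ := fun t => (1 - t) / f (quantile F t) with hφ
  have hderiv : ∀ x ∈ Ioo q 1, HasDerivAt (fun p => -ewIntegral F p) (φ x) x := by
    intro x hx
    have hx' : x ∈ Ioo (0:ℝ) 1 := ⟨lt_trans hq.1 hx.1, hx.2⟩
    have := (ew_hasDerivAt hF hFc hFs hfd hFmean hx' (hfpos x hx')).neg
    exact this.congr_deriv (by simp [hφ])
  have hnonneg : ∀ x ∈ Ioo q 1, 0 ≤ φ x := by
    intro x hx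
    have hx' : x ∈ Ioo (0:ℝ) 1 := ⟨lt_trans hq.1 hx.1, hx.2⟩
    exact div_nonneg (by linarith [hx.2]) (hfpos x hx').le
  -- continuity of the extension N on [q,1]
  set N : ℝ → ℝ := Function.update (fun p => -ewIntegral F p) 1 0 with hN
  have hNcont : ContinuousOn N (Icc q 1) := by
    rw [hN, continuousOn_update_iff]
    constructor
    · intro x hx
      have hx' : x ∈ Ioo (0:ℝ) 1 := ⟨lt_of_lt_of_le hq.1 hx.1.1, lt_of_le_of_ne hx.1.2 hx.2⟩
      exact ((ew_hasDerivAt hF hFc hFs hfd hFmean hx' (hfpos x hx')).neg).continuousAt.continuousWithinAt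
    · intro _
      have h0 : Tendsto (fun p => -ewIntegral F p) (nhdsWithin 1 (Iio (1:ℝ))) (nhds 0) := by
        simpa using (ew_tendsto hF hFc hFs hFmean).neg
      refine h0.mono_left (nhdsWithin_mono _ ?_)
      intro x hx
      exact lt_of_le_of_ne hx.1.2 hx.2
  have hNderiv : ∀ x ∈ Ioo q 1, HasDerivAt N (φ x) x := by
    intro x hx
    refine (hderiv x hx).congr_of_eventuallyEq ?_
    filter_upwards [Iio_mem_nhds hx.2] with y hy
    rw [hN, Function.update_of_ne (ne_of_lt hy)]
  have hint : IntervalIntegrable φ volume q 1 := by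
    rw [intervalIntegrable_iff_integrableOn_Ioc_of_le hq.2.le]
    exact intervalIntegral.integrableOn_deriv_of_nonneg hNcont hNderiv hnonneg
  have ha : Tendsto (fun p => -ewIntegral F p) (nhdsWithin q (Ioi q)) (nhds (-ewIntegral F q)) := by
    exact (((ew_hasDerivAt hF hFc hFs hfd hFmean hq (hfpos q hq)).neg).continuousAt.continuousWithinAt).tendsto
  have hb : Tendsto (fun p => -ewIntegral F p) (nhdsWithin 1 (Iio (1:ℝ))) (nhds 0) := by
    simpa using (ew_tendsto hF hFc hFs hFmean).neg
  have := intervalIntegral.integral_eq_sub_of_hasDerivAt_of_tendsto hq.2 hderiv hint ha hb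
  rw [this]
  ring

lemma deriv_nonneg_of_monotoneOn {r : ℝ → ℝ} {c p : ℝ}
    (hm : MonotoneOn r (Ioo (0:ℝ) 1)) (hp : p ∈ Ioo (0:ℝ) 1)
    (hd : HasDerivAt r c p) : 0 ≤ c := by
  have h := hasDerivAt_iff_tendsto_slope.1 hd
  have h2 : Tendsto (slope r p) (nhdsWithin p (Ioi p)) (nhds c) :=
    h.mono_left (nhdsWithin_mono _ (fun x hx => ne_of_gt hx))
  refine ge_of_tendsto h2 ?_
  filter_upwards [Ioo_mem_nhdsGT_of_mem (left_mem_Ico.2 hp.2)] with x hx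
  rw [slope_def_field]
  have hx' : x ∈ Ioo (0:ℝ) 1 := ⟨lt_trans hp.1 hx.1, hx.2⟩
  exact div_nonneg (sub_nonneg.2 (hm hp hx' hx.1.le)) (sub_nonneg.2 hx.1.le)

end myAux

/-- **Lemma 3.** For nonnegative absolutely continuous random variables with finite means,
strictly increasing distribution functions `F`, `G` and densities `f`, `g` positive at the
quantiles, `X ≤_dmrl Y` iff for all `0 < p ≤ q < 1`,
`(1 / g(G⁻¹(p))) ∫_q^1 (1-t)/f(F⁻¹(t)) dt ≤ (1 / f(F⁻¹(p))) ∫_q^1 (1-t)/g(G⁻¹(t)) dt`. -/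

theorem dmrl_iff_quantile_integral_ineq_two_param
    (F G f g : ℝ → ℝ)
    (hF : IsNonnegCDF F) (hG : IsNonnegCDF G)
    (hFstrict : StrictMonoOn F (Ici 0)) (hGstrict : StrictMonoOn G (Ici 0))
    (hfd : ∀ x : ℝ, HasDerivAt F (f x) x) (hgd : ∀ x : ℝ, HasDerivAt G (g x) x)
    (hFmean : IntegrableOn (fun x => 1 - F x) (Ioi 0) volume)
    (hGmean : IntegrableOn (fun x => 1 - G x) (Ioi 0) volume)
    (hfpos : ∀ p ∈ Ioo (0:ℝ) 1, 0 < f (quantile F p))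
    (hgpos : ∀ p ∈ Ioo (0:ℝ) 1, 0 < g (quantile G p)) :
    DMRL_le F G ↔
      ∀ p q : ℝ, 0 < p → p ≤ q → q < 1 →
        (1 / g (quantile G p)) * ∫ t in q..1, (1 - t) / f (quantile F t) ≤
          (1 / f (quantile F p)) * ∫ t in q..1, (1 - t) / g (quantile G t) := by
  have hFc : Continuous F := continuous_iff_continuousAt.2 fun x => (hfd x).continuousAt
  have hGc : Continuous G := continuous_iff_continuousAt.2 fun x => (hgd x).continuousAt
  have hderivRatio : ∀ x ∈ Ioo (0:ℝ) 1,
      HasDerivAt (fun p => ewIntegral G p / ewIntegral F p)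
        ((-((1 - x) / g (quantile G x)) * ewIntegral F x -
          ewIntegral G x * -((1 - x) / f (quantile F x))) / ewIntegral F x ^ 2) x := by
    intro x hx
    exact (ew_hasDerivAt hG hGc hGstrict hgd hGmean hx (hgpos x hx)).div
      (ew_hasDerivAt hF hFc hFstrict hfd hFmean hx (hfpos x hx))
      (ne_of_gt (ew_pos hF hFc hFstrict hFmean hx))
  constructor
  · intro hdmrl p q hp hpq hq1
    have hp' : p ∈ Ioo (0:ℝ) 1 := ⟨hp, lt_of_le_of_lt hpq hq1⟩
    have hq' : q ∈ Ioo (0:ℝ) 1 := ⟨lt_of_lt_of_le hp hpq, hq1⟩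
    rw [ew_repr hF hFc hFstrict hfd hFmean hfpos hq',
      ew_repr hG hGc hGstrict hgd hGmean hgpos hq']
    have hWFp := ew_pos hF hFc hFstrict hFmean hp'
    have hWFq := ew_pos hF hFc hFstrict hFmean hq'
    have hWGp := ew_pos hG hGc hGstrict hGmean hp'
    have hWGq := ew_pos hG hGc hGstrict hGmean hq'
    have hfp := hfpos p hp'
    have hgp := hgpos p hp'
    have h1p : (0:ℝ) < 1 - p := by linarith [hp'.2]
    -- derivative of the ratio is nonnegative at p
    have hc := deriv_nonneg_of_monotoneOn hdmrl hp' (hderivRatio p hp')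
    have hnum : 0 ≤ -((1 - p) / g (quantile G p)) * ewIntegral F p -
        ewIntegral G p * -((1 - p) / f (quantile F p)) := by
      have h := mul_nonneg hc (sq_nonneg (ewIntegral F p))
      rwa [div_mul_cancel₀ _ (pow_ne_zero 2 (ne_of_gt hWFp))] at h
    -- step 1 : (1/gp) * WF p ≤ (1/fp) * WG p
    have hnum' : 0 ≤ (1 - p) * ((1 / f (quantile F p)) * ewIntegral G p -
        (1 / g (quantile G p)) * ewIntegral F p) := by
      have hrw : -((1 - p) / g (quantile G p)) * ewIntegral F p -
          ewIntegral G p * -((1 - p) / f (quantile F p)) =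
          (1 - p) * ((1 / f (quantile F p)) * ewIntegral G p -
          (1 / g (quantile G p)) * ewIntegral F p) := by ring
      rwa [hrw] at hnum
    have step1 : (1 / g (quantile G p)) * ewIntegral F p ≤
        (1 / f (quantile F p)) * ewIntegral G p := by
      have h2 : (1 - p) * ((1 / g (quantile G p)) * ewIntegral F p) ≤
          (1 - p) * ((1 / f (quantile F p)) * ewIntegral G p) := by
        ring_nf at hnum' ⊢
        linarith
      exact le_of_mul_le_mul_left h2 h1p
    -- step 2 : from monotonicity
    have hmono := hdmrl hp' hq' hpq
    have hm2 : ewIntegral G p * ewIntegral F q ≤ ewIntegral G q * ewIntegral F p := by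
      rw [div_le_div_iff₀ hWFp hWFq] at hmono
      exact hmono
    have C1 := mul_le_mul_of_nonneg_right step1 hWFq.le
    have C2 := mul_le_mul_of_nonneg_left hm2
      (le_of_lt (by positivity : (0:ℝ) < 1 / f (quantile F p)))
    have C3 : ((1 / g (quantile G p)) * ewIntegral F q) * ewIntegral F p ≤
        ((1 / f (quantile F p)) * ewIntegral G q) * ewIntegral F p := by
      ring_nf at C1 C2 ⊢
      linarith
    exact le_of_mul_le_mul_right C3 hWFp
  · intro hcond
    apply monotoneOn_of_deriv_nonneg (convex_Ioo 0 1)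
    · exact fun x hx => ((hderivRatio x hx).continuousAt).continuousWithinAt
    · rw [interior_Ioo]
      exact fun x hx => ((hderivRatio x hx).differentiableAt).differentiableWithinAt
    · intro x hx
      rw [interior_Ioo] at hx
      rw [(hderivRatio x hx).deriv]
      apply div_nonneg _ (sq_nonneg _)
      have h := hcond x x hx.1 le_rfl hx.2
      rw [ew_repr hF hFc hFstrict hfd hFmean hfpos hx,
        ew_repr hG hGc hGstrict hgd hGmean hgpos hx] at h
      have h1x : (0:ℝ) < 1 - x := by linarith [hx.2]
      have hrw : -((1 - x) / g (quantile G x)) * ewIntegral F x -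
          ewIntegral G x * -((1 - x) / f (quantile F x)) =
          (1 - x) * ((1 / f (quantile F x)) * ewIntegral G x -
          (1 / g (quantile G x)) * ewIntegral F x) := by ring
      rw [hrw]
      exact mul_nonneg h1x.le (by linarith)
end

section
/- Let X and Y be nonnegative absolutely continuous random variables with finite means and strictly increasing distribution functions F and G, and let h be an antistarshaped, strictly increasing, differentiable distortion function. If X ≤_dmrl Y, then X_h ≤_dmrl Y_h. -/
open MeasureTheory Set Filter

section AuxDMRL

variable {W : ℝ → ℝ}

lemma aux_quantile_spec (hc : Continuous W) (h0 : ∀ x ≤ 0, W x = 0)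
    (hs : StrictMonoOn W (Ici 0)) {p : ℝ} (hp : 0 < p) (hex : ∃ x, p ≤ W x) :
    0 < quantile W p ∧ W (quantile W p) = p := by
  have hSsub : {x : ℝ | p ≤ W x} ⊆ Ioi 0 := by
    intro x hx
    by_contra hx0
    simp only [mem_Ioi, not_lt] at hx0
    have hWx : W x = 0 := h0 x (by simpa using hx0)
    simp only [mem_setOf_eq, hWx] at hx
    linarith
  have hbdd : BddBelow {x : ℝ | p ≤ W x} := ⟨0, fun x hx => (hSsub hx).le⟩
  have hne : {x : ℝ | p ≤ W x}.Nonempty := hex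
  have hclosed : IsClosed {x : ℝ | p ≤ W x} := isClosed_le continuous_const hc
  have hmem : quantile W p ∈ {x : ℝ | p ≤ W x} := hclosed.csInf_mem hne hbdd
  have hq0 : 0 < quantile W p := hSsub hmem
  refine ⟨hq0, le_antisymm ?_ hmem⟩
  by_contra hlt
  push_neg at hlt
  have hev : ∀ᶠ x in nhds (quantile W p), p < W x :=
    hc.continuousAt.eventually_const_lt hlt
  have hev' : ∀ᶠ x in nhdsWithin (quantile W p) (Iio (quantile W p)), p < W x :=
    hev.filter_mono nhdsWithin_le_nhds
  obtain ⟨x, hxlt, hpx⟩ := (hev'.and self_mem_nhdsWithin).exists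
  exact absurd (csInf_le hbdd (hxlt.le : p ≤ W x)) (not_le.mpr hpx)


lemma aux_quantile_le_iff (hc : Continuous W) (h0 : ∀ x ≤ 0, W x = 0)
    (hs : StrictMonoOn W (Ici 0)) {p : ℝ} (hp : 0 < p) (hex : ∃ x, p ≤ W x) (x : ℝ) :
    quantile W p ≤ x ↔ p ≤ W x := by
  obtain ⟨hq0, hqv⟩ := aux_quantile_spec hc h0 hs hp hex
  constructor
  · intro hqx
    calc p = W (quantile W p) := hqv.symm
    _ ≤ W x := (hs.monotoneOn) (le_of_lt hq0) (hq0.le.trans hqx) hqx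
  · intro hpx
    exact csInf_le ⟨0, fun y hy => by
      by_contra hy0
      push_neg at hy0
      have := h0 y hy0.le
      simp only [mem_setOf_eq, this] at hy
      linarith⟩ hpx

lemma aux_quantile_lt_iff (hc : Continuous W) (h0 : ∀ x ≤ 0, W x = 0)
    (hs : StrictMonoOn W (Ici 0)) {p : ℝ} (hp : 0 < p) (hex : ∃ x, p ≤ W x) (x : ℝ) :
    quantile W p < x ↔ p < W x := by
  obtain ⟨hq0, hqv⟩ := aux_quantile_spec hc h0 hs hp hex
  constructor
  · intro hqx
    calc p = W (quantile W p) := hqv.symm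
    _ < W x := hs hq0.le (hq0.le.trans hqx.le) hqx
  · intro hpx
    rcases lt_or_ge (quantile W p) x with hlt | hle
    · exact hlt
    · exfalso
      have hx0 : 0 < x := by
        by_contra hx0
        push_neg at hx0
        rw [h0 x hx0] at hpx; linarith
      have : W x ≤ W (quantile W p) := hs.monotoneOn hx0.le hq0.le hle
      rw [hqv] at this; linarith

lemma aux_csInf_mem_Icc {k : ℝ → ℝ} {s t r : ℝ} (hst : s ≤ t) :
    sInf ({v | v ∈ Icc s t ∧ r < k v} ∪ {t}) ∈ Icc s t := by
  constructor
  · apply le_csInf ⟨t, Or.inr rfl⟩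
    rintro v (⟨⟨h1, _⟩, _⟩ | rfl)
    · exact h1
    · exact hst
  · exact csInf_le ⟨s, by rintro v (⟨⟨h1, _⟩, _⟩ | rfl); exacts [h1, hst]⟩ (Or.inr rfl)

lemma aux_measure_Icc_eq_Ioo {μ : Measure ℝ} (hμ : ∀ a : ℝ, μ {a} = 0) (a b : ℝ) :
    μ (Icc a b) = μ (Ioo a b) := by
  refine le_antisymm ?_ (measure_mono Ioo_subset_Icc_self)
  have hsub : Icc a b ⊆ Ioo a b ∪ ({a} ∪ {b}) := by
    intro x hx
    rcases eq_or_lt_of_le hx.1 with h1 | h1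
    · exact Or.inr (Or.inl (by simp [h1.symm]))
    rcases eq_or_lt_of_le hx.2 with h2 | h2
    · exact Or.inr (Or.inr (by simp [h2]))
    · exact Or.inl ⟨h1, h2⟩
  calc μ (Icc a b) ≤ μ (Ioo a b ∪ ({a} ∪ {b})) := measure_mono hsub
  _ ≤ μ (Ioo a b) + μ ({a} ∪ {b}) := measure_union_le _ _
  _ ≤ μ (Ioo a b) + (μ {a} + μ {b}) := by gcongr; exact measure_union_le _ _
  _ = μ (Ioo a b) := by rw [hμ a, hμ b]; simp


lemma aux_level_Ioc {k : ℝ → ℝ} (μ : Measure ℝ) (hμ : ∀ a : ℝ, μ {a} = 0)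
    (hc : Continuous W) (h0 : ∀ x ≤ 0, W x = 0) (hs : StrictMonoOn W (Ici 0))
    (hex : ∀ p : ℝ, 0 < p → p < 1 → ∃ x, p ≤ W x)
    (hk : MonotoneOn k (Ico 0 1))
    {s t r : ℝ} (hs0 : 0 < s) (hst : s ≤ t) (ht1 : t < 1) :
    μ ({a | r < k (W a)} ∩ Ioc (quantile W s) (quantile W t))
      = μ (Ioc (quantile W (sInf ({v | v ∈ Icc s t ∧ r < k v} ∪ {t})))
            (quantile W t)) := by
  set c := sInf ({v | v ∈ Icc s t ∧ r < k v} ∪ {t}) with hcdef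
  have hcmem : c ∈ Icc s t := aux_csInf_mem_Icc hst
  have hc0 : 0 < c := lt_of_lt_of_le hs0 hcmem.1
  have hc1 : c < 1 := lt_of_le_of_lt hcmem.2 ht1
  have ht0 : 0 < t := lt_of_lt_of_le hs0 hst
  have hexc := hex c hc0 hc1
  have hext := hex t ht0 ht1
  have hexs := hex s hs0 (lt_of_le_of_lt hst ht1)
  obtain ⟨hqc0, hqcv⟩ := aux_quantile_spec hc h0 hs hc0 hexc
  obtain ⟨hqt0, hqtv⟩ := aux_quantile_spec hc h0 hs ht0 hext
  have hbdd : BddBelow ({v | v ∈ Icc s t ∧ r < k v} ∪ {t}) :=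
    ⟨s, by rintro v (⟨⟨h1, _⟩, _⟩ | rfl); exacts [h1, hst]⟩
  have hsub1 : {a | r < k (W a)} ∩ Ioc (quantile W s) (quantile W t)
      ⊆ Icc (quantile W c) (quantile W t) := by
    rintro y ⟨hky, hy1, hy2⟩
    have hWys : s < W y := (aux_quantile_lt_iff hc h0 hs hs0 hexs y).mp hy1
    have hWyt : W y ≤ t := by
      have := (aux_quantile_lt_iff hc h0 hs ht0 hext y).not.mp (not_lt.mpr hy2)
      exact not_lt.mp this
    have hcle : c ≤ W y := csInf_le hbdd (Or.inl ⟨⟨hWys.le, hWyt⟩, hky⟩)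
    exact ⟨(aux_quantile_le_iff hc h0 hs hc0 hexc y).mpr hcle, hy2⟩
  have hsub2 : Ioo (quantile W c) (quantile W t)
      ⊆ {a | r < k (W a)} ∩ Ioc (quantile W s) (quantile W t) := by
    rintro y ⟨hy1, hy2⟩
    have hWyc : c < W y := (aux_quantile_lt_iff hc h0 hs hc0 hexc y).mp hy1
    have hWyt : W y < t := by
      have := (aux_quantile_le_iff hc h0 hs ht0 hext y).not.mp (not_le.mpr hy2)
      exact not_le.mp this
    obtain ⟨w, hwmem, hwlt⟩ := exists_lt_of_csInf_lt ⟨t, Or.inr rfl⟩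
      (show sInf ({v | v ∈ Icc s t ∧ r < k v} ∪ {t}) < W y from hcdef ▸ hWyc)
    rcases hwmem with ⟨⟨hws, hwt⟩, hwr⟩ | rfl
    · have hkw : k w ≤ k (W y) :=
        hk ⟨le_trans hs0.le hws, lt_of_le_of_lt hwt ht1⟩
          ⟨(hc0.trans hWyc).le, hWyt.trans ht1⟩ hwlt.le
      refine ⟨lt_of_lt_of_le hwr hkw, ?_, hy2.le⟩
      have hqsqc : quantile W s ≤ quantile W c :=
        (aux_quantile_le_iff hc h0 hs hs0 hexs _).mpr (by rw [hqcv]; exact hcmem.1)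
      exact lt_of_le_of_lt hqsqc hy1
    · exact absurd hwlt (not_lt.mpr hWyt.le)
  have hIcc : μ (Icc (quantile W c) (quantile W t))
      = μ (Ioo (quantile W c) (quantile W t)) := aux_measure_Icc_eq_Ioo hμ _ _
  refine le_antisymm ?_ ?_
  · calc μ ({a | r < k (W a)} ∩ Ioc (quantile W s) (quantile W t))
        ≤ μ (Icc (quantile W c) (quantile W t)) := measure_mono hsub1
    _ = μ (Ioo (quantile W c) (quantile W t)) := hIcc
    _ ≤ μ (Ioc (quantile W c) (quantile W t)) := measure_mono Ioo_subset_Ioc_self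
  · calc μ (Ioc (quantile W c) (quantile W t))
        ≤ μ (Icc (quantile W c) (quantile W t)) := measure_mono Ioc_subset_Icc_self
    _ = μ (Ioo (quantile W c) (quantile W t)) := hIcc
    _ ≤ μ ({a | r < k (W a)} ∩ Ioc (quantile W s) (quantile W t)) := measure_mono hsub2

lemma aux_csInf_mem_Icc' {k : ℝ → ℝ} {t r : ℝ} (ht1 : t ≤ 1) :
    sInf ({v | v ∈ Ico t 1 ∧ r < k v} ∪ {1}) ∈ Icc t 1 := by
  constructor
  · apply le_csInf ⟨(1:ℝ), Or.inr rfl⟩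
    rintro v (⟨⟨h1, _⟩, _⟩ | rfl)
    · exact h1
    · exact ht1
  · exact csInf_le ⟨t, by rintro v (⟨⟨h1, _⟩, _⟩ | rfl); exacts [h1, ht1]⟩ (Or.inr rfl)

lemma aux_level_tail {k : ℝ → ℝ} (μ : Measure ℝ) (hμ : ∀ a : ℝ, μ {a} = 0)
    (hc : Continuous W) (h0 : ∀ x ≤ 0, W x = 0) (hs : StrictMonoOn W (Ici 0))
    (hex : ∀ p : ℝ, 0 < p → p < 1 → ∃ x, p ≤ W x) (hW1 : ∀ x, W x < 1)
    (hk : MonotoneOn k (Ico 0 1))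
    {t r d : ℝ} (ht0 : 0 < t) (ht1 : t < 1)
    (hd : d = sInf ({v | v ∈ Ico t 1 ∧ r < k v} ∪ {1})) (hd1 : d < 1) :
    μ ({a | r < k (W a)} ∩ Ioi (quantile W t)) = μ (Ioi (quantile W d)) := by
  have hdmem : d ∈ Icc t 1 := hd ▸ aux_csInf_mem_Icc' ht1.le
  have hd0 : 0 < d := lt_of_lt_of_le ht0 hdmem.1
  have hexd := hex d hd0 hd1
  have hext := hex t ht0 ht1
  obtain ⟨hqd0, hqdv⟩ := aux_quantile_spec hc h0 hs hd0 hexd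
  obtain ⟨hqt0, hqtv⟩ := aux_quantile_spec hc h0 hs ht0 hext
  have hbdd : BddBelow ({v | v ∈ Ico t 1 ∧ r < k v} ∪ {1}) :=
    ⟨t, by rintro v (⟨⟨h1, _⟩, _⟩ | rfl); exacts [h1, ht1.le]⟩
  have hsub1 : {a | r < k (W a)} ∩ Ioi (quantile W t) ⊆ Ici (quantile W d) := by
    rintro y ⟨hky, hy1⟩
    have hWyt : t < W y := (aux_quantile_lt_iff hc h0 hs ht0 hext y).mp hy1
    have hdle : d ≤ W y := hd ▸ csInf_le hbdd (Or.inl ⟨⟨hWyt.le, hW1 y⟩, hky⟩)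
    exact (aux_quantile_le_iff hc h0 hs hd0 hexd y).mpr hdle
  have hsub2 : Ioi (quantile W d) ⊆ {a | r < k (W a)} ∩ Ioi (quantile W t) := by
    intro y hy1
    have hWyd : d < W y := (aux_quantile_lt_iff hc h0 hs hd0 hexd y).mp hy1
    obtain ⟨w, hwmem, hwlt⟩ := exists_lt_of_csInf_lt ⟨(1:ℝ), Or.inr rfl⟩
      (show sInf ({v | v ∈ Ico t 1 ∧ r < k v} ∪ {1}) < W y from hd ▸ hWyd)
    rcases hwmem with ⟨⟨hwt, hw1⟩, hwr⟩ | rfl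
    · have hkw : k w ≤ k (W y) :=
        hk ⟨le_trans ht0.le hwt, hw1⟩ ⟨(hd0.trans hWyd).le, hW1 y⟩ hwlt.le
      refine ⟨lt_of_lt_of_le hwr hkw, ?_⟩
      have : quantile W t ≤ quantile W d :=
        (aux_quantile_le_iff hc h0 hs ht0 hext _).mpr (by rw [hqdv]; exact hdmem.1)
      exact lt_of_le_of_lt this hy1
    · exact absurd hwlt (not_lt.mpr (hW1 y).le)
  have hIci : μ (Ici (quantile W d)) = μ (Ioi (quantile W d)) := by
    refine le_antisymm ?_ (measure_mono Ioi_subset_Ici_self)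
    calc μ (Ici (quantile W d)) ≤ μ (Ioi (quantile W d) ∪ {quantile W d}) := by
          apply measure_mono; intro x hx
          rcases eq_or_lt_of_le (mem_Ici.mp hx) with h1 | h1
          · exact Or.inr (by simp [h1.symm])
          · exact Or.inl h1
    _ ≤ μ (Ioi (quantile W d)) + μ {quantile W d} := measure_union_le _ _
    _ = μ (Ioi (quantile W d)) := by rw [hμ]; simp
  refine le_antisymm ?_ ?_
  · calc μ ({a | r < k (W a)} ∩ Ioi (quantile W t)) ≤ μ (Ici (quantile W d)) :=
        measure_mono hsub1
    _ = μ (Ioi (quantile W d)) := hIci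
  · exact measure_mono hsub2

lemma aux_level_tail_empty {k : ℝ → ℝ} (μ : Measure ℝ)
    (hc : Continuous W) (h0 : ∀ x ≤ 0, W x = 0) (hs : StrictMonoOn W (Ici 0))
    (hex : ∀ p : ℝ, 0 < p → p < 1 → ∃ x, p ≤ W x)
    (hW1 : ∀ x, W x < 1) {t r d : ℝ} (ht0 : 0 < t) (ht1 : t < 1)
    (hd : d = sInf ({v | v ∈ Ico t 1 ∧ r < k v} ∪ {1})) (hd1 : ¬ d < 1) :
    μ ({a | r < k (W a)} ∩ Ioi (quantile W t)) = 0 := by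
  have hempty : ({a | r < k (W a)} ∩ Ioi (quantile W t)) = ∅ := by
    ext y
    simp only [mem_inter_iff, mem_setOf_eq, mem_Ioi, mem_empty_iff_false, iff_false]
    rintro ⟨hky, hy1⟩
    have hWyt : t < W y :=
      (aux_quantile_lt_iff hc h0 hs ht0 (hex t ht0 ht1) y).mp hy1
    have hbdd : BddBelow ({v | v ∈ Ico t 1 ∧ r < k v} ∪ {1}) :=
      ⟨t, by rintro v (⟨⟨h1, _⟩, _⟩ | rfl); exacts [h1, ht1.le]⟩
    have : d ≤ W y := hd ▸ csInf_le hbdd (Or.inl ⟨⟨hWyt.le, hW1 y⟩, hky⟩)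
    exact absurd (lt_of_le_of_lt this (hW1 y)) hd1
  rw [hempty, measure_empty]


open scoped ENNReal in
lemma aux_core_ineq {dF dG eFt eGt eFd eGd : ℝ≥0∞}
    (h1 : (dG + eGt) * eFt ≤ eGt * (dF + eFt))
    (h2 : eGt * eFd ≤ eGd * eFt)
    (hft0 : eFt ≠ 0) (hft : eFt ≠ ⊤) (hgt : eGt ≠ ⊤) (hfd : eFd ≠ ⊤) :
    dG * eFd ≤ eGd * dF := by
  have step1 : dG * eFt ≤ eGt * dF := by
    have h1' : dG * eFt + eGt * eFt ≤ eGt * dF + eGt * eFt := by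
      calc dG * eFt + eGt * eFt = (dG + eGt) * eFt := by ring
      _ ≤ eGt * (dF + eFt) := h1
      _ = eGt * dF + eGt * eFt := by ring
    exact (ENNReal.add_le_add_iff_right (ENNReal.mul_ne_top hgt hft)).mp h1'
  have step2 : (dG * eFd) * eFt ≤ (eGd * dF) * eFt := by
    calc (dG * eFd) * eFt = (dG * eFt) * eFd := by ring
    _ ≤ (eGt * dF) * eFd := by exact mul_le_mul_left step1 eFd
    _ = dF * (eGt * eFd) := by ring
    _ ≤ dF * (eGd * eFt) := by exact mul_le_mul_right h2 dF
    _ = (eGd * dF) * eFt := by ring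
  exact (ENNReal.mul_le_mul_iff_left hft0 hft).mp step2

lemma aux_distorted_continuous {F h : ℝ → ℝ} (hFc : Continuous F) (hF0 : ∀ x, 0 ≤ F x)
    (hF1 : ∀ x, F x < 1) (hdist : IsDistortionFn h)
    (hdiff : ∀ p ∈ Ioo (0:ℝ) 1, DifferentiableAt ℝ h p) :
    Continuous (distortedCDF h F) := by
  rw [continuous_iff_continuousAt]
  intro x
  have hmain : ContinuousAt (fun y => h (1 - F y)) x := by
    rcases eq_or_lt_of_le (hF0 x) with hx0 | hx0
    · -- F x = 0, so 1 - F x = 1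
      have hcw : ContinuousWithinAt h (Iic 1) 1 := by
        have := hdist.2.1 1 ⟨zero_lt_one, le_refl 1⟩
        rw [← Iio_insert]
        exact ContinuousWithinAt.insert this
      have hg : ContinuousAt (fun y => 1 - F y) x := (continuous_const.sub hFc).continuousAt
      have hmaps : MapsTo (fun y => 1 - F y) univ (Iic 1) := fun y _ => by
        simp only [mem_Iic]; linarith [hF0 y]
      have hval : (1 : ℝ) - F x = 1 := by rw [← hx0]; ring
      have hcw' : ContinuousWithinAt h (Iic 1) (1 - F x) := by rw [hval]; exact hcw
      have : ContinuousWithinAt ((fun p => h p) ∘ (fun y => 1 - F y)) univ x :=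
        ContinuousWithinAt.comp (s := univ) hcw'
          (hg.continuousWithinAt) (fun y _ => hmaps (mem_univ y))
      rw [continuousWithinAt_univ] at this
      exact this
    · have hmem : (1 - F x) ∈ Ioo (0:ℝ) 1 := ⟨by linarith [hF1 x], by linarith⟩
      exact ContinuousAt.comp (hdiff _ hmem).continuousAt
        ((continuous_const.sub hFc).continuousAt : ContinuousAt (fun y => 1 - F y) x)
  exact (continuous_const.continuousAt.sub hmain)


open scoped ENNReal in
lemma aux_core {F G k : ℝ → ℝ} (μF μG : Measure ℝ)
    (hμFnull : ∀ a : ℝ, μF {a} = 0) (hμGnull : ∀ a : ℝ, μG {a} = 0)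
    (hFc : Continuous F) (hFz : ∀ x ≤ 0, F x = 0) (hFs : StrictMonoOn F (Ici 0))
    (hF1 : ∀ x, F x < 1)
    (hFex : ∀ p : ℝ, 0 < p → p < 1 → ∃ x, p ≤ F x)
    (hGc : Continuous G) (hGz : ∀ x ≤ 0, G x = 0) (hGs : StrictMonoOn G (Ici 0))
    (hG1 : ∀ x, G x < 1)
    (hGex : ∀ p : ℝ, 0 < p → p < 1 → ∃ x, p ≤ G x)
    (hk : MonotoneOn k (Ico 0 1))
    (hκF : Monotone (fun x => k (F x))) (hκG : Monotone (fun x => k (G x)))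
    (hκFnn : ∀ x, 0 ≤ k (F x)) (hκGnn : ∀ x, 0 ≤ k (G x))
    (H1 : ∀ u v : ℝ, u ∈ Ioo (0:ℝ) 1 → v ∈ Ioo (0:ℝ) 1 → u ≤ v →
      μG (Ioi (quantile G u)) * μF (Ioi (quantile F v))
        ≤ μG (Ioi (quantile G v)) * μF (Ioi (quantile F u)))
    (hEF : ∀ v ∈ Ioo (0:ℝ) 1, μF (Ioi (quantile F v)) ≠ 0 ∧ μF (Ioi (quantile F v)) ≠ ⊤)
    (hEG : ∀ v ∈ Ioo (0:ℝ) 1, μG (Ioi (quantile G v)) ≠ ⊤)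
    {s t : ℝ} (hsm : s ∈ Ioo (0:ℝ) 1) (htm : t ∈ Ioo (0:ℝ) 1) (hst : s ≤ t) :
    (∫⁻ x in Ioi (quantile G s), ENNReal.ofReal (k (G x)) ∂μG) *
      (∫⁻ x in Ioi (quantile F t), ENNReal.ofReal (k (F x)) ∂μF)
      ≤ (∫⁻ x in Ioi (quantile G t), ENNReal.ofReal (k (G x)) ∂μG) *
        (∫⁻ x in Ioi (quantile F s), ENNReal.ofReal (k (F x)) ∂μF) := by
  obtain ⟨hs0, hs1⟩ := hsm
  obtain ⟨ht0, ht1⟩ := htm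
  obtain ⟨hqFt0, hqFtv⟩ := aux_quantile_spec hFc hFz hFs ht0 (hFex t ht0 ht1)
  obtain ⟨hqGt0, hqGtv⟩ := aux_quantile_spec hGc hGz hGs ht0 (hGex t ht0 ht1)
  have hqF : quantile F s ≤ quantile F t :=
    (aux_quantile_le_iff hFc hFz hFs hs0 (hFex s hs0 hs1) _).mpr (by rw [hqFtv]; exact hst)
  have hqG : quantile G s ≤ quantile G t :=
    (aux_quantile_le_iff hGc hGz hGs hs0 (hGex s hs0 hs1) _).mpr (by rw [hqGtv]; exact hst)
  have hsplitF : (∫⁻ x in Ioi (quantile F s), ENNReal.ofReal (k (F x)) ∂μF)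
      = (∫⁻ x in Ioc (quantile F s) (quantile F t), ENNReal.ofReal (k (F x)) ∂μF)
        + (∫⁻ x in Ioi (quantile F t), ENNReal.ofReal (k (F x)) ∂μF) := by
    rw [← lintegral_union measurableSet_Ioi (Ioc_disjoint_Ioi le_rfl),
      Ioc_union_Ioi_eq_Ioi hqF]
  have hsplitG : (∫⁻ x in Ioi (quantile G s), ENNReal.ofReal (k (G x)) ∂μG)
      = (∫⁻ x in Ioc (quantile G s) (quantile G t), ENNReal.ofReal (k (G x)) ∂μG)
        + (∫⁻ x in Ioi (quantile G t), ENNReal.ofReal (k (G x)) ∂μG) := by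
    rw [← lintegral_union measurableSet_Ioi (Ioc_disjoint_Ioi le_rfl),
      Ioc_union_Ioi_eq_Ioi hqG]
  set BF := ∫⁻ x in Ioc (quantile F s) (quantile F t), ENNReal.ofReal (k (F x)) ∂μF with hBF
  set BG := ∫⁻ x in Ioc (quantile G s) (quantile G t), ENNReal.ofReal (k (G x)) ∂μG with hBG
  set TF := ∫⁻ x in Ioi (quantile F t), ENNReal.ofReal (k (F x)) ∂μF with hTF
  set TG := ∫⁻ x in Ioi (quantile G t), ENNReal.ofReal (k (G x)) ∂μG with hTG
  rw [hsplitF, hsplitG]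
  have key : BG * TF ≤ TG * BF := by
    -- layer cake representations
    have hmG : Measurable (fun x => k (G x)) := hκG.measurable
    have hmF : Measurable (fun x => k (F x)) := hκF.measurable
    have hBGlc : BG = ∫⁻ r in Ioi (0:ℝ),
        μG ({a | r < k (G a)} ∩ Ioc (quantile G s) (quantile G t)) := by
      rw [hBG, lintegral_eq_lintegral_meas_lt _ (Filter.Eventually.of_forall (fun a => hκGnn a))
        (hmG.aemeasurable.restrict)]
      refine lintegral_congr_ae (Filter.Eventually.of_forall (fun r => ?_))
      exact Measure.restrict_apply (measurableSet_lt measurable_const hmG)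
    have hBFlc : BF = ∫⁻ r in Ioi (0:ℝ),
        μF ({a | r < k (F a)} ∩ Ioc (quantile F s) (quantile F t)) := by
      rw [hBF, lintegral_eq_lintegral_meas_lt _ (Filter.Eventually.of_forall (fun a => hκFnn a))
        (hmF.aemeasurable.restrict)]
      refine lintegral_congr_ae (Filter.Eventually.of_forall (fun r => ?_))
      exact Measure.restrict_apply (measurableSet_lt measurable_const hmF)
    have hTFlc : TF = ∫⁻ r in Ioi (0:ℝ),
        μF ({a | r < k (F a)} ∩ Ioi (quantile F t)) := by
      rw [hTF, lintegral_eq_lintegral_meas_lt _ (Filter.Eventually.of_forall (fun a => hκFnn a))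
        (hmF.aemeasurable.restrict)]
      refine lintegral_congr_ae (Filter.Eventually.of_forall (fun r => ?_))
      exact Measure.restrict_apply (measurableSet_lt measurable_const hmF)
    have hTGlc : TG = ∫⁻ r in Ioi (0:ℝ),
        μG ({a | r < k (G a)} ∩ Ioi (quantile G t)) := by
      rw [hTG, lintegral_eq_lintegral_meas_lt _ (Filter.Eventually.of_forall (fun a => hκGnn a))
        (hmG.aemeasurable.restrict)]
      refine lintegral_congr_ae (Filter.Eventually.of_forall (fun r => ?_))
      exact Measure.restrict_apply (measurableSet_lt measurable_const hmG)
    -- level-set evaluation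
    have hlevG : ∀ r : ℝ, μG ({a | r < k (G a)} ∩ Ioc (quantile G s) (quantile G t))
        = μG (Ioc (quantile G (sInf ({v | v ∈ Icc s t ∧ r < k v} ∪ {t}))) (quantile G t)) :=
      fun r => aux_level_Ioc μG hμGnull hGc hGz hGs hGex hk hs0 hst ht1
    have hlevF : ∀ r : ℝ, μF ({a | r < k (F a)} ∩ Ioc (quantile F s) (quantile F t))
        = μF (Ioc (quantile F (sInf ({v | v ∈ Icc s t ∧ r < k v} ∪ {t}))) (quantile F t)) :=
      fun r => aux_level_Ioc μF hμFnull hFc hFz hFs hFex hk hs0 hst ht1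
    -- pointwise inequality between the level measures
    have hpoint : ∀ r r' : ℝ,
        μG ({a | r < k (G a)} ∩ Ioc (quantile G s) (quantile G t)) *
          μF ({a | r' < k (F a)} ∩ Ioi (quantile F t))
        ≤ μG ({a | r' < k (G a)} ∩ Ioi (quantile G t)) *
          μF ({a | r < k (F a)} ∩ Ioc (quantile F s) (quantile F t)) := by
      intro r r'
      set c := sInf ({v | v ∈ Icc s t ∧ r < k v} ∪ {t}) with hcdef
      have hcmem : c ∈ Icc s t := aux_csInf_mem_Icc hst
      have hc0 : 0 < c := lt_of_lt_of_le hs0 hcmem.1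
      have hc1 : c < 1 := lt_of_le_of_lt hcmem.2 ht1
      set d := sInf ({v | v ∈ Ico t 1 ∧ r' < k v} ∪ {1}) with hddef
      by_cases hd1 : d < 1
      · -- main case
        have hdmem : d ∈ Icc t 1 := aux_csInf_mem_Icc' ht1.le
        have hd0 : 0 < d := lt_of_lt_of_le ht0 hdmem.1
        rw [hlevG r, hlevF r,
          aux_level_tail μF hμFnull hFc hFz hFs hFex hF1 hk ht0 ht1 hddef hd1,
          aux_level_tail μG hμGnull hGc hGz hGs hGex hG1 hk ht0 ht1 hddef hd1]
        -- convert Ioc measures: μ (Ioc (q c) (q t)) with μ (Ioi (q c)) = Ioc + Ioi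
        have hqFc : quantile F c ≤ quantile F t :=
          (aux_quantile_le_iff hFc hFz hFs hc0 (hFex c hc0 hc1) _).mpr
            (by rw [hqFtv]; exact hcmem.2)
        have hqGc : quantile G c ≤ quantile G t :=
          (aux_quantile_le_iff hGc hGz hGs hc0 (hGex c hc0 hc1) _).mpr
            (by rw [hqGtv]; exact hcmem.2)
        have haddF : μF (Ioc (quantile F c) (quantile F t)) + μF (Ioi (quantile F t))
            = μF (Ioi (quantile F c)) := by
          rw [← measure_union (Ioc_disjoint_Ioi le_rfl) measurableSet_Ioi,
            Ioc_union_Ioi_eq_Ioi hqFc]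
        have haddG : μG (Ioc (quantile G c) (quantile G t)) + μG (Ioi (quantile G t))
            = μG (Ioi (quantile G c)) := by
          rw [← measure_union (Ioc_disjoint_Ioi le_rfl) measurableSet_Ioi,
            Ioc_union_Ioi_eq_Ioi hqGc]
        refine aux_core_ineq ?_ ?_ (hEF t ⟨ht0, ht1⟩).1 (hEF t ⟨ht0, ht1⟩).2
          (hEG t ⟨ht0, ht1⟩) (hEF d ⟨hd0, hd1⟩).2
        · rw [haddG, haddF]
          exact H1 c t ⟨hc0, hc1⟩ ⟨ht0, ht1⟩ hcmem.2
        · exact H1 t d ⟨ht0, ht1⟩ ⟨hd0, hd1⟩ hdmem.1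
      · rw [aux_level_tail_empty μF hFc hFz hFs hFex hF1 ht0 ht1 hddef hd1,
          aux_level_tail_empty μG hGc hGz hGs hGex hG1 ht0 ht1 hddef hd1]
        simp
    -- combine
    have hmeasLG : AEMeasurable
        (fun r : ℝ => μG ({a | r < k (G a)} ∩ Ioc (quantile G s) (quantile G t)))
        (volume.restrict (Ioi (0:ℝ))) := by
      refine (Antitone.measurable ?_).aemeasurable
      intro r1 r2 h12
      exact measure_mono (inter_subset_inter_left _ (fun a ha => lt_of_le_of_lt h12 ha))
    have hmeasTG : AEMeasurable
        (fun r : ℝ => μG ({a | r < k (G a)} ∩ Ioi (quantile G t)))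
        (volume.restrict (Ioi (0:ℝ))) := by
      refine (Antitone.measurable ?_).aemeasurable
      intro r1 r2 h12
      exact measure_mono (inter_subset_inter_left _ (fun a ha => lt_of_le_of_lt h12 ha))
    calc BG * TF
        = ∫⁻ r in Ioi (0:ℝ), (μG ({a | r < k (G a)} ∩ Ioc (quantile G s) (quantile G t)) * TF) := by
          rw [hBGlc, lintegral_mul_const'' _ hmeasLG]
      _ ≤ ∫⁻ r in Ioi (0:ℝ), (TG * μF ({a | r < k (F a)} ∩ Ioc (quantile F s) (quantile F t))) := by
          refine lintegral_mono (fun r => ?_)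
          calc μG ({a | r < k (G a)} ∩ Ioc (quantile G s) (quantile G t)) * TF
              = ∫⁻ r' in Ioi (0:ℝ), (μG ({a | r < k (G a)} ∩ Ioc (quantile G s) (quantile G t)) *
                  μF ({a | r' < k (F a)} ∩ Ioi (quantile F t))) := by
                rw [hTFlc, lintegral_const_mul'' _ (by
                  refine (Antitone.measurable ?_).aemeasurable
                  intro r1 r2 h12
                  exact measure_mono (inter_subset_inter_left _
                    (fun a ha => lt_of_le_of_lt h12 ha)))]
            _ ≤ ∫⁻ r' in Ioi (0:ℝ), (μG ({a | r' < k (G a)} ∩ Ioi (quantile G t)) *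
                  μF ({a | r < k (F a)} ∩ Ioc (quantile F s) (quantile F t))) :=
                lintegral_mono (fun r' => hpoint r r')
            _ = TG * μF ({a | r < k (F a)} ∩ Ioc (quantile F s) (quantile F t)) := by
                rw [hTGlc, lintegral_mul_const'' _ hmeasTG]
      _ = TG * BF := by
          rw [hBFlc, lintegral_const_mul'' _ (by
            refine (Antitone.measurable ?_).aemeasurable
            intro r1 r2 h12
            exact measure_mono (inter_subset_inter_left _ (fun a ha => lt_of_le_of_lt h12 ha)))]
  calc (BG + TG) * TF = BG * TF + TG * TF := by ring
    _ ≤ TG * BF + TG * TF := add_le_add_left key _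
    _ = TG * (BF + TF) := by ring

end AuxDMRL

/-- **Theorem 4 (preservation of the dmrl order).**
Let `X`, `Y` be nonnegative absolutely continuous random variables with finite means and
strictly increasing distribution functions `F`, `G`, and let `h` be an antistarshaped,
strictly increasing, differentiable distortion function.  If `X ≤_dmrl Y`, then
`X_h ≤_dmrl Y_h`. -/
theorem dmrl_preserved_by_antistarshaped_distortion
    (F G f g h : ℝ → ℝ)
    (hF : IsNonnegCDF F) (hG : IsNonnegCDF G)
    (hFstrict : StrictMonoOn F (Ici 0)) (hGstrict : StrictMonoOn G (Ici 0))
    (hfd : ∀ x : ℝ, HasDerivAt F (f x) x) (hgd : ∀ x : ℝ, HasDerivAt G (g x) x)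
    (hFmean : IntegrableOn (fun x => 1 - F x) (Ioi 0) volume)
    (hGmean : IntegrableOn (fun x => 1 - G x) (Ioi 0) volume)
    (hdist : IsDistortionFn h) (hstrict : StrictMonoOn h (Icc 0 1))
    (hdiff : ∀ p ∈ Ioo (0:ℝ) 1, DifferentiableAt ℝ h p)
    (hanti : Antistarshaped h)
    (hle : DMRL_le F G) :
    DMRL_le (distortedCDF h F) (distortedCDF h G) := by
  classical
  obtain ⟨hFmono, hFz', hFtend⟩ := hF
  obtain ⟨hGmono, hGz', hGtend⟩ := hG
  have hFz : ∀ x ≤ 0, F x = 0 := fun x hx => hFz' x hx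
  have hGz : ∀ x ≤ 0, G x = 0 := fun x hx => hGz' x hx
  have hFc : Continuous F := continuous_iff_continuousAt.mpr fun x => (hfd x).continuousAt
  have hGc : Continuous G := continuous_iff_continuousAt.mpr fun x => (hgd x).continuousAt
  have hF0 : ∀ x, 0 ≤ F x := by
    intro x
    have h1 : F (min x (-1)) = 0 := hFz _ (le_trans (min_le_right _ _) (by norm_num))
    calc (0:ℝ) = F (min x (-1)) := h1.symm
    _ ≤ F x := hFmono (min_le_left _ _)
  have hG0 : ∀ x, 0 ≤ G x := by
    intro x
    have h1 : G (min x (-1)) = 0 := hGz _ (le_trans (min_le_right _ _) (by norm_num))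
    calc (0:ℝ) = G (min x (-1)) := h1.symm
    _ ≤ G x := hGmono (min_le_left _ _)
  have hFle1 : ∀ x, F x ≤ 1 := fun x => hFmono.ge_of_tendsto hFtend x
  have hGle1 : ∀ x, G x ≤ 1 := fun x => hGmono.ge_of_tendsto hGtend x
  have hF1 : ∀ x, F x < 1 := by
    intro x
    have hx : F x ≤ F (max x 0) := hFmono (le_max_left _ _)
    have : F (max x 0) < F (max x 0 + 1) :=
      hFstrict (mem_Ici.mpr (le_max_right x 0)) (le_trans (le_max_right x 0) (by linarith)) (by linarith)
    exact lt_of_le_of_lt hx (lt_of_lt_of_le this (hFle1 _))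
  have hG1 : ∀ x, G x < 1 := by
    intro x
    have hx : G x ≤ G (max x 0) := hGmono (le_max_left _ _)
    have : G (max x 0) < G (max x 0 + 1) :=
      hGstrict (mem_Ici.mpr (le_max_right x 0)) (le_trans (le_max_right x 0) (by linarith)) (by linarith)
    exact lt_of_le_of_lt hx (lt_of_lt_of_le this (hGle1 _))
  have hFex : ∀ p : ℝ, 0 < p → p < 1 → ∃ x, p ≤ F x := fun p _ hp1 =>
    (hFtend.eventually_const_le hp1).exists
  have hGex : ∀ p : ℝ, 0 < p → p < 1 → ∃ x, p ≤ G x := fun p _ hp1 =>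
    (hGtend.eventually_const_le hp1).exists
  obtain ⟨hmono, hleft, h0, h1, hmaps⟩ := hdist
  -- the function k and its properties
  set k : ℝ → ℝ := fun v => h (1 - v) / (1 - v) with hkdef
  have hkmono : MonotoneOn k (Ico 0 1) := by
    intro v1 hv1 v2 hv2 h12
    exact hanti ⟨by linarith [hv2.2], by linarith [hv2.1]⟩
      ⟨by linarith [hv1.2], by linarith [hv1.1]⟩ (by linarith)
  have hκFmono : Monotone (fun x => k (F x)) := fun x y hxy =>
    hkmono ⟨hF0 x, hF1 x⟩ ⟨hF0 y, hF1 y⟩ (hFmono hxy)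
  have hκGmono : Monotone (fun x => k (G x)) := fun x y hxy =>
    hkmono ⟨hG0 x, hG1 x⟩ ⟨hG0 y, hG1 y⟩ (hGmono hxy)
  have hknn : ∀ v ∈ Ico (0:ℝ) 1, 0 ≤ k v := by
    intro v hv
    exact div_nonneg (hmaps ⟨by linarith [hv.2], by linarith [hv.1]⟩).1 (by linarith [hv.2])
  have hκFnn : ∀ x, 0 ≤ k (F x) := fun x => hknn _ ⟨hF0 x, hF1 x⟩
  have hκGnn : ∀ x, 0 ≤ k (G x) := fun x => hknn _ ⟨hG0 x, hG1 x⟩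
  have hidentF : ∀ x, h (1 - F x) = k (F x) * (1 - F x) := by
    intro x
    rw [hkdef]
    exact (div_mul_cancel₀ _ (ne_of_gt (by linarith [hF1 x]))).symm
  have hidentG : ∀ x, h (1 - G x) = k (G x) * (1 - G x) := by
    intro x
    rw [hkdef]
    exact (div_mul_cancel₀ _ (ne_of_gt (by linarith [hG1 x]))).symm
  have hmeasHF : Measurable (fun x => h (1 - F x)) := by
    have : (fun x => h (1 - F x)) = fun x => k (F x) * (1 - F x) := funext hidentF
    rw [this]
    exact hκFmono.measurable.mul (continuous_const.sub hFc).measurable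
  have hmeasHG : Measurable (fun x => h (1 - G x)) := by
    have : (fun x => h (1 - G x)) = fun x => k (G x) * (1 - G x) := funext hidentG
    rw [this]
    exact hκGmono.measurable.mul (continuous_const.sub hGc).measurable
  have hhnnF : ∀ x, 0 ≤ h (1 - F x) := fun x =>
    (hmaps ⟨by linarith [hF1 x], by linarith [hF0 x]⟩).1
  have hhnnG : ∀ x, 0 ≤ h (1 - G x) := fun x =>
    (hmaps ⟨by linarith [hG1 x], by linarith [hG0 x]⟩).1
  have hhle1F : ∀ x, h (1 - F x) ≤ 1 := fun x =>
    (hmaps ⟨by linarith [hF1 x], by linarith [hF0 x]⟩).2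
  have hhle1G : ∀ x, h (1 - G x) ≤ 1 := fun x =>
    (hmaps ⟨by linarith [hG1 x], by linarith [hG0 x]⟩).2
  -- nonnegative quantile for the distorted CDFs (needed in degenerate cases)
  have hQnonneg : ∀ (W : ℝ → ℝ), (∀ x ≤ 0, W x = 0) → ∀ p : ℝ, 0 < p →
      0 ≤ quantile (distortedCDF h W) p := by
    intro W hWz p hp
    have hsub : {x : ℝ | p ≤ distortedCDF h W x} ⊆ Ioi 0 := by
      intro x hx
      by_contra hx0
      simp only [mem_Ioi, not_lt] at hx0
      have : distortedCDF h W x = 0 := by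
        simp [distortedCDF, hWz x (by simpa using hx0), h1]
      rw [mem_setOf_eq, this] at hx
      linarith
    rcases eq_empty_or_nonempty {x : ℝ | p ≤ distortedCDF h W x} with he | hne
    · unfold quantile
      rw [he, Real.sInf_empty]
    · exact le_csInf hne fun x hx => (hsub hx).le
  -- degenerate case: distorted survival not integrable
  have hzero : ∀ (W : ℝ → ℝ), (∀ x ≤ 0, W x = 0) →
      Measurable (fun x => h (1 - W x)) → (∀ x, 0 ≤ h (1 - W x)) → (∀ x, h (1 - W x) ≤ 1) →
      ¬ IntegrableOn (fun x => h (1 - W x)) (Ioi 0) volume →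
      ∀ p : ℝ, 0 < p → ewIntegral (distortedCDF h W) p = 0 := by
    intro W hWz hmeas hnn hle1 hni p hp
    set Q := quantile (distortedCDF h W) p with hQ
    have hQ0 : 0 ≤ Q := hQnonneg W hWz p hp
    have hint : ¬ IntegrableOn (fun x => h (1 - W x)) (Ioi Q) volume := by
      intro hint
      apply hni
      have hbdd : IntegrableOn (fun x => h (1 - W x)) (Ioc 0 Q) volume := by
        apply Measure.integrableOn_of_bounded (M := 1)
        · rw [Real.volume_Ioc]; exact ENNReal.ofReal_ne_top
        · exact hmeas.aestronglyMeasurable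
        · refine Filter.Eventually.of_forall fun x => ?_
          rw [Real.norm_eq_abs, abs_of_nonneg (hnn x)]
          exact hle1 x
      have := hbdd.union hint
      rwa [Ioc_union_Ioi_eq_Ioi hQ0] at this
    have hrw : ewIntegral (distortedCDF h W) p = ∫ x in Ioi Q, h (1 - W x) := by
      unfold ewIntegral
      rw [← hQ]
      congr 1
      funext x
      simp [distortedCDF]
    rw [hrw, integral_undef hint]
  by_cases HIF : IntegrableOn (fun x => h (1 - F x)) (Ioi 0) volume
  · by_cases HIG : IntegrableOn (fun x => h (1 - G x)) (Ioi 0) volume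
    · -- main case
      have hsmall : ∀ ε : ℝ, 0 < ε → ∃ p : ℝ, 0 < p ∧ p ≤ 1 ∧ h p < ε := by
        intro ε hε
        by_contra hcon
        push_neg at hcon
        have hconst : IntegrableOn (fun _ : ℝ => ε) (Ioi 0) volume := by
          refine HIF.mono' aestronglyMeasurable_const ?_
          refine Filter.Eventually.of_forall fun x => ?_
          rw [Real.norm_eq_abs, abs_of_pos hε]
          exact hcon _ (by linarith [hF1 x]) (by linarith [hF0 x])
        rcases ((integrableOn_const_iff (C := ε)).mp hconst).imp_left enorm_eq_zero.mp with hc | hc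
        · linarith
        · rw [Real.volume_Ioi] at hc
          exact absurd hc (by simp)
      have htend0 : ∀ (W : ℝ → ℝ), Monotone W → (∀ x, 0 ≤ W x) → (∀ x, W x < 1) →
          Tendsto W atTop (nhds 1) → Tendsto (fun x => h (1 - W x)) atTop (nhds 0) := by
        intro W hWmono hW0 hW1' hWtend
        rw [tendsto_order]
        constructor
        · intro a ha
          exact Filter.Eventually.of_forall fun x => lt_of_lt_of_le ha
            ((hmaps ⟨by linarith [hW1' x], by linarith [hW0 x]⟩).1)
        · intro ε hε
          obtain ⟨p₀, hp₀0, hp₀1, hp₀ε⟩ := hsmall ε hε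
          filter_upwards [hWtend.eventually_const_lt (show 1 - p₀ < 1 by linarith)] with x hx
          have : h (1 - W x) ≤ h p₀ :=
            hmono ⟨by linarith [hW1' x], by linarith [hW0 x]⟩ ⟨hp₀0.le, hp₀1⟩ (by linarith)
          linarith
      have hFhtend : Tendsto (distortedCDF h F) atTop (nhds 1) := by
        have := (tendsto_const_nhds (x := (1:ℝ)) (f := atTop)).sub
          (htend0 F hFmono hF0 hF1 hFtend)
        rw [sub_zero] at this
        exact this
      have hGhtend : Tendsto (distortedCDF h G) atTop (nhds 1) := by
        have := (tendsto_const_nhds (x := (1:ℝ)) (f := atTop)).sub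
          (htend0 G hGmono hG0 hG1 hGtend)
        rw [sub_zero] at this
        exact this
      have hFhc : Continuous (distortedCDF h F) :=
        aux_distorted_continuous hFc hF0 hF1 ⟨hmono, hleft, h0, h1, hmaps⟩ hdiff
      have hGhc : Continuous (distortedCDF h G) :=
        aux_distorted_continuous hGc hG0 hG1 ⟨hmono, hleft, h0, h1, hmaps⟩ hdiff
      have hFhz : ∀ x ≤ 0, distortedCDF h F x = 0 := fun x hx => by
        simp [distortedCDF, hFz x hx, h1]
      have hGhz : ∀ x ≤ 0, distortedCDF h G x = 0 := fun x hx => by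
        simp [distortedCDF, hGz x hx, h1]
      have hFhs : StrictMonoOn (distortedCDF h F) (Ici 0) := by
        intro x hx y hy hxy
        have : h (1 - F y) < h (1 - F x) :=
          hstrict ⟨by linarith [hF1 y], by linarith [hF0 y]⟩
            ⟨by linarith [hF1 x], by linarith [hF0 x]⟩
            (by have := hFstrict hx hy hxy; linarith)
        simp only [distortedCDF]
        linarith
      have hGhs : StrictMonoOn (distortedCDF h G) (Ici 0) := by
        intro x hx y hy hxy
        have : h (1 - G y) < h (1 - G x) :=
          hstrict ⟨by linarith [hG1 y], by linarith [hG0 y]⟩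
            ⟨by linarith [hG1 x], by linarith [hG0 x]⟩
            (by have := hGstrict hx hy hxy; linarith)
        simp only [distortedCDF]
        linarith
      have hFhex : ∀ p : ℝ, 0 < p → p < 1 → ∃ x, p ≤ distortedCDF h F x := fun p _ hp1 =>
        (hFhtend.eventually_const_le hp1).exists
      have hGhex : ∀ p : ℝ, 0 < p → p < 1 → ∃ x, p ≤ distortedCDF h G x := fun p _ hp1 =>
        (hGhtend.eventually_const_le hp1).exists
      set μF : Measure ℝ := volume.withDensity (fun x => ENNReal.ofReal (1 - F x)) with hμF
      set μG : Measure ℝ := volume.withDensity (fun x => ENNReal.ofReal (1 - G x)) with hμG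
      have hμFnull : ∀ a : ℝ, μF {a} = 0 := fun a =>
        (withDensity_absolutelyContinuous volume _) (measure_singleton a)
      have hμGnull : ∀ a : ℝ, μG {a} = 0 := fun a =>
        (withDensity_absolutelyContinuous volume _) (measure_singleton a)
      have hwFmeas : Measurable (fun x => ENNReal.ofReal (1 - F x)) :=
        ENNReal.measurable_ofReal.comp (continuous_const.sub hFc).measurable
      have hwGmeas : Measurable (fun x => ENNReal.ofReal (1 - G x)) :=
        ENNReal.measurable_ofReal.comp (continuous_const.sub hGc).measurable
      have hEWF : ∀ v ∈ Ioo (0:ℝ) 1, ewIntegral F v = (μF (Ioi (quantile F v))).toReal ∧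
          μF (Ioi (quantile F v)) ≠ 0 ∧ μF (Ioi (quantile F v)) ≠ ⊤ := by
        intro v hv
        obtain ⟨hq0, hqv⟩ := aux_quantile_spec hFc hFz hFstrict hv.1 (hFex v hv.1 hv.2)
        have happ : μF (Ioi (quantile F v))
            = ∫⁻ x in Ioi (quantile F v), ENNReal.ofReal (1 - F x) := by
          rw [hμF, withDensity_apply _ measurableSet_Ioi]
        have hIntq : IntegrableOn (fun x => 1 - F x) (Ioi (quantile F v)) volume :=
          hFmean.mono_set (Ioi_subset_Ioi hq0.le)
        refine ⟨?_, ?_, ?_⟩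
        · rw [happ]
          unfold ewIntegral
          rw [integral_eq_lintegral_of_nonneg_ae (f := fun x => 1 - F x)
            (Filter.Eventually.of_forall fun x => by show (0:ℝ) ≤ 1 - F x; linarith [hF1 x])
            (continuous_const.sub hFc).measurable.aestronglyMeasurable]
        · rw [happ]
          intro hzero'
          have hle' : ENNReal.ofReal (1 - F (quantile F v + 1)) *
              volume (Ioc (quantile F v) (quantile F v + 1))
              ≤ ∫⁻ x in Ioi (quantile F v), ENNReal.ofReal (1 - F x) := by
            calc ENNReal.ofReal (1 - F (quantile F v + 1)) *
                volume (Ioc (quantile F v) (quantile F v + 1))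
                = ∫⁻ _ in Ioc (quantile F v) (quantile F v + 1),
                    ENNReal.ofReal (1 - F (quantile F v + 1)) :=
                  (setLIntegral_const _ _).symm
              _ ≤ ∫⁻ x in Ioc (quantile F v) (quantile F v + 1), ENNReal.ofReal (1 - F x) := by
                  refine setLIntegral_mono hwFmeas fun x hx => ?_
                  exact ENNReal.ofReal_le_ofReal (by linarith [hFmono hx.2])
              _ ≤ ∫⁻ x in Ioi (quantile F v), ENNReal.ofReal (1 - F x) :=
                  lintegral_mono_set Ioc_subset_Ioi_self
          rw [hzero'] at hle'
          rcases mul_eq_zero.mp (le_zero_iff.mp hle') with hc | hc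
          · rw [ENNReal.ofReal_eq_zero] at hc
            linarith [hF1 (quantile F v + 1)]
          · rw [Real.volume_Ioc, ENNReal.ofReal_eq_zero] at hc
            linarith
        · rw [happ]
          exact (Integrable.lintegral_lt_top hIntq).ne
      have hEWG : ∀ v ∈ Ioo (0:ℝ) 1, ewIntegral G v = (μG (Ioi (quantile G v))).toReal ∧
          μG (Ioi (quantile G v)) ≠ 0 ∧ μG (Ioi (quantile G v)) ≠ ⊤ := by
        intro v hv
        obtain ⟨hq0, hqv⟩ := aux_quantile_spec hGc hGz hGstrict hv.1 (hGex v hv.1 hv.2)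
        have happ : μG (Ioi (quantile G v))
            = ∫⁻ x in Ioi (quantile G v), ENNReal.ofReal (1 - G x) := by
          rw [hμG, withDensity_apply _ measurableSet_Ioi]
        have hIntq : IntegrableOn (fun x => 1 - G x) (Ioi (quantile G v)) volume :=
          hGmean.mono_set (Ioi_subset_Ioi hq0.le)
        refine ⟨?_, ?_, ?_⟩
        · rw [happ]
          unfold ewIntegral
          rw [integral_eq_lintegral_of_nonneg_ae (f := fun x => 1 - G x)
            (Filter.Eventually.of_forall fun x => by show (0:ℝ) ≤ 1 - G x; linarith [hG1 x])
            (continuous_const.sub hGc).measurable.aestronglyMeasurable]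
        · rw [happ]
          intro hzero'
          have hle' : ENNReal.ofReal (1 - G (quantile G v + 1)) *
              volume (Ioc (quantile G v) (quantile G v + 1))
              ≤ ∫⁻ x in Ioi (quantile G v), ENNReal.ofReal (1 - G x) := by
            calc ENNReal.ofReal (1 - G (quantile G v + 1)) *
                volume (Ioc (quantile G v) (quantile G v + 1))
                = ∫⁻ _ in Ioc (quantile G v) (quantile G v + 1),
                    ENNReal.ofReal (1 - G (quantile G v + 1)) :=
                  (setLIntegral_const _ _).symm
              _ ≤ ∫⁻ x in Ioc (quantile G v) (quantile G v + 1), ENNReal.ofReal (1 - G x) := by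
                  refine setLIntegral_mono hwGmeas fun x hx => ?_
                  exact ENNReal.ofReal_le_ofReal (by linarith [hGmono hx.2])
              _ ≤ ∫⁻ x in Ioi (quantile G v), ENNReal.ofReal (1 - G x) :=
                  lintegral_mono_set Ioc_subset_Ioi_self
          rw [hzero'] at hle'
          rcases mul_eq_zero.mp (le_zero_iff.mp hle') with hc | hc
          · rw [ENNReal.ofReal_eq_zero] at hc
            linarith [hG1 (quantile G v + 1)]
          · rw [Real.volume_Ioc, ENNReal.ofReal_eq_zero] at hc
            linarith
        · rw [happ]
          exact (Integrable.lintegral_lt_top hIntq).ne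
      have H1 : ∀ u v : ℝ, u ∈ Ioo (0:ℝ) 1 → v ∈ Ioo (0:ℝ) 1 → u ≤ v →
          μG (Ioi (quantile G u)) * μF (Ioi (quantile F v))
            ≤ μG (Ioi (quantile G v)) * μF (Ioi (quantile F u)) := by
        intro u v hu hv huv
        obtain ⟨hewFu, hFu0, hFufin⟩ := hEWF u hu
        obtain ⟨hewFv, hFv0, hFvfin⟩ := hEWF v hv
        obtain ⟨hewGu, hGu0, hGufin⟩ := hEWG u hu
        obtain ⟨hewGv, hGv0, hGvfin⟩ := hEWG v hv
        have hratio := hle hu hv huv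
        simp only at hratio
        have hFupos : 0 < ewIntegral F u := by
          rw [hewFu]; exact ENNReal.toReal_pos hFu0 hFufin
        have hFvpos : 0 < ewIntegral F v := by
          rw [hewFv]; exact ENNReal.toReal_pos hFv0 hFvfin
        have hcross : ewIntegral G u * ewIntegral F v ≤ ewIntegral G v * ewIntegral F u :=
          (div_le_div_iff₀ hFupos hFvpos).mp hratio
        rw [← ENNReal.ofReal_toReal hGufin, ← ENNReal.ofReal_toReal hFvfin,
          ← ENNReal.ofReal_toReal hGvfin, ← ENNReal.ofReal_toReal hFufin,
          ← ENNReal.ofReal_mul ENNReal.toReal_nonneg, ← ENNReal.ofReal_mul ENNReal.toReal_nonneg]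
        apply ENNReal.ofReal_le_ofReal
        rw [← hewGu, ← hewFv, ← hewGv, ← hewFu]
        exact hcross
      have hAeqF : ∀ q : ℝ, (∫⁻ x in Ioi q, ENNReal.ofReal (k (F x)) ∂μF)
          = ∫⁻ x in Ioi q, ENNReal.ofReal (h (1 - F x)) := by
        intro q
        rw [hμF, restrict_withDensity measurableSet_Ioi,
          lintegral_withDensity_eq_lintegral_mul _ hwFmeas
            hκFmono.measurable.ennreal_ofReal]
        refine lintegral_congr fun x => ?_
        simp only [Pi.mul_apply, Function.comp_apply]
        rw [← ENNReal.ofReal_mul (by linarith [hF1 x] : (0:ℝ) ≤ 1 - F x)]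
        congr 1
        rw [mul_comm, ← hidentF x]
      have hAeqG : ∀ q : ℝ, (∫⁻ x in Ioi q, ENNReal.ofReal (k (G x)) ∂μG)
          = ∫⁻ x in Ioi q, ENNReal.ofReal (h (1 - G x)) := by
        intro q
        rw [hμG, restrict_withDensity measurableSet_Ioi,
          lintegral_withDensity_eq_lintegral_mul _ hwGmeas
            hκGmono.measurable.ennreal_ofReal]
        refine lintegral_congr fun x => ?_
        simp only [Pi.mul_apply, Function.comp_apply]
        rw [← ENNReal.ofReal_mul (by linarith [hG1 x] : (0:ℝ) ≤ 1 - G x)]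
        congr 1
        rw [mul_comm, ← hidentG x]
      have hsurvle : ∀ x : ℝ, 1 - F x ≤ h (1 - F x) := by
        intro x
        have hp : (0:ℝ) < 1 - F x := by linarith [hF1 x]
        have := hanti ⟨hp, by linarith [hF0 x]⟩ ⟨zero_lt_one, le_refl 1⟩ (by linarith [hF0 x])
        simp only [h1, div_one] at this
        exact (one_le_div hp).mp this
      have hsurvleG : ∀ x : ℝ, 1 - G x ≤ h (1 - G x) := by
        intro x
        have hp : (0:ℝ) < 1 - G x := by linarith [hG1 x]
        have := hanti ⟨hp, by linarith [hG0 x]⟩ ⟨zero_lt_one, le_refl 1⟩ (by linarith [hG0 x])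
        simp only [h1, div_one] at this
        exact (one_le_div hp).mp this
      have hAF : ∀ v ∈ Ioo (0:ℝ) 1,
          (∫⁻ x in Ioi (quantile F v), ENNReal.ofReal (k (F x)) ∂μF) ≠ 0
          ∧ (∫⁻ x in Ioi (quantile F v), ENNReal.ofReal (k (F x)) ∂μF) ≠ ⊤ := by
        intro v hv
        obtain ⟨hq0, hqv⟩ := aux_quantile_spec hFc hFz hFstrict hv.1 (hFex v hv.1 hv.2)
        constructor
        · rw [hAeqF]
          intro hzero'
          apply (hEWF v hv).2.1
          have hle' : μF (Ioi (quantile F v))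
              ≤ ∫⁻ x in Ioi (quantile F v), ENNReal.ofReal (h (1 - F x)) := by
            rw [hμF, withDensity_apply _ measurableSet_Ioi]
            exact lintegral_mono fun x => ENNReal.ofReal_le_ofReal (hsurvle x)
          rw [hzero'] at hle'
          exact le_zero_iff.mp hle'
        · rw [hAeqF]
          exact (Integrable.lintegral_lt_top (HIF.mono_set (Ioi_subset_Ioi hq0.le))).ne
      have hAG : ∀ v ∈ Ioo (0:ℝ) 1,
          (∫⁻ x in Ioi (quantile G v), ENNReal.ofReal (k (G x)) ∂μG) ≠ 0
          ∧ (∫⁻ x in Ioi (quantile G v), ENNReal.ofReal (k (G x)) ∂μG) ≠ ⊤ := by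
        intro v hv
        obtain ⟨hq0, hqv⟩ := aux_quantile_spec hGc hGz hGstrict hv.1 (hGex v hv.1 hv.2)
        constructor
        · rw [hAeqG]
          intro hzero'
          apply (hEWG v hv).2.1
          have hle' : μG (Ioi (quantile G v))
              ≤ ∫⁻ x in Ioi (quantile G v), ENNReal.ofReal (h (1 - G x)) := by
            rw [hμG, withDensity_apply _ measurableSet_Ioi]
            exact lintegral_mono fun x => ENNReal.ofReal_le_ofReal (hsurvleG x)
          rw [hzero'] at hle'
          exact le_zero_iff.mp hle'
        · rw [hAeqG]
          exact (Integrable.lintegral_lt_top (HIG.mono_set (Ioi_subset_Ioi hq0.le))).ne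
      have hmainF : ∀ p ∈ Ioo (0:ℝ) 1,
          (F (quantile (distortedCDF h F) p) ∈ Ioo (0:ℝ) 1) ∧
          h (1 - F (quantile (distortedCDF h F) p)) = 1 - p ∧
          ewIntegral (distortedCDF h F) p
            = (∫⁻ x in Ioi (quantile F (F (quantile (distortedCDF h F) p))),
                ENNReal.ofReal (k (F x)) ∂μF).toReal := by
        intro p hp
        obtain ⟨hQ0, hQv⟩ := aux_quantile_spec hFhc hFhz hFhs hp.1 (hFhex p hp.1 hp.2)
        have huF0 : 0 < F (quantile (distortedCDF h F) p) := by
          have := hFstrict (mem_Ici.mpr (le_refl (0:ℝ))) (mem_Ici.mpr (le_of_lt hQ0)) hQ0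
          rwa [hFz 0 le_rfl] at this
        have huF1 : F (quantile (distortedCDF h F) p) < 1 := hF1 _
        have hhuF : h (1 - F (quantile (distortedCDF h F) p)) = 1 - p := by
          have : 1 - h (1 - F (quantile (distortedCDF h F) p)) = p := hQv
          linarith
        refine ⟨⟨huF0, huF1⟩, hhuF, ?_⟩
        obtain ⟨hq0', hqv'⟩ := aux_quantile_spec hFc hFz hFstrict huF0 (hFex _ huF0 huF1)
        have hquF : quantile F (F (quantile (distortedCDF h F) p))
            = quantile (distortedCDF h F) p :=
          hFstrict.injOn hq0'.le hQ0.le hqv'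
        rw [hquF, hAeqF]
        unfold ewIntegral
        have hcongr : ∫ x in Ioi (quantile (distortedCDF h F) p), (1 - distortedCDF h F x)
            = ∫ x in Ioi (quantile (distortedCDF h F) p), h (1 - F x) := by
          congr 1
          funext x
          simp [distortedCDF]
        rw [hcongr, integral_eq_lintegral_of_nonneg_ae
          (Filter.Eventually.of_forall fun x => hhnnF x) hmeasHF.aestronglyMeasurable]
      have hmainG : ∀ p ∈ Ioo (0:ℝ) 1,
          (G (quantile (distortedCDF h G) p) ∈ Ioo (0:ℝ) 1) ∧
          h (1 - G (quantile (distortedCDF h G) p)) = 1 - p ∧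
          ewIntegral (distortedCDF h G) p
            = (∫⁻ x in Ioi (quantile G (G (quantile (distortedCDF h G) p))),
                ENNReal.ofReal (k (G x)) ∂μG).toReal := by
        intro p hp
        obtain ⟨hQ0, hQv⟩ := aux_quantile_spec hGhc hGhz hGhs hp.1 (hGhex p hp.1 hp.2)
        have huG0 : 0 < G (quantile (distortedCDF h G) p) := by
          have := hGstrict (mem_Ici.mpr (le_refl (0:ℝ))) (mem_Ici.mpr (le_of_lt hQ0)) hQ0
          rwa [hGz 0 le_rfl] at this
        have huG1 : G (quantile (distortedCDF h G) p) < 1 := hG1 _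
        have hhuG : h (1 - G (quantile (distortedCDF h G) p)) = 1 - p := by
          have : 1 - h (1 - G (quantile (distortedCDF h G) p)) = p := hQv
          linarith
        refine ⟨⟨huG0, huG1⟩, hhuG, ?_⟩
        obtain ⟨hq0', hqv'⟩ := aux_quantile_spec hGc hGz hGstrict huG0 (hGex _ huG0 huG1)
        have hquG : quantile G (G (quantile (distortedCDF h G) p))
            = quantile (distortedCDF h G) p :=
          hGstrict.injOn hq0'.le hQ0.le hqv'
        rw [hquG, hAeqG]
        unfold ewIntegral
        have hcongr : ∫ x in Ioi (quantile (distortedCDF h G) p), (1 - distortedCDF h G x)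
            = ∫ x in Ioi (quantile (distortedCDF h G) p), h (1 - G x) := by
          congr 1
          funext x
          simp [distortedCDF]
        rw [hcongr, integral_eq_lintegral_of_nonneg_ae
          (Filter.Eventually.of_forall fun x => hhnnG x) hmeasHG.aestronglyMeasurable]
      -- final monotonicity
      intro p hp p' hp' hpp'
      obtain ⟨humemF, hhuF, hewF⟩ := hmainF p hp
      obtain ⟨humemF', hhuF', hewF'⟩ := hmainF p' hp'
      obtain ⟨humemG, hhuG, hewG⟩ := hmainG p hp
      obtain ⟨humemG', hhuG', hewG'⟩ := hmainG p' hp'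
      have hs'_eq : G (quantile (distortedCDF h G) p) = F (quantile (distortedCDF h F) p) := by
        have h1s : 1 - G (quantile (distortedCDF h G) p)
            = 1 - F (quantile (distortedCDF h F) p) :=
          hstrict.injOn ⟨by linarith [humemG.2], by linarith [humemG.1]⟩
            ⟨by linarith [humemF.2], by linarith [humemF.1]⟩ (by rw [hhuG, hhuF])
        linarith
      have ht'_eq : G (quantile (distortedCDF h G) p') = F (quantile (distortedCDF h F) p') := by
        have h1t : 1 - G (quantile (distortedCDF h G) p')
            = 1 - F (quantile (distortedCDF h F) p') :=
          hstrict.injOn ⟨by linarith [humemG'.2], by linarith [humemG'.1]⟩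
            ⟨by linarith [humemF'.2], by linarith [humemF'.1]⟩ (by rw [hhuG', hhuF'])
        linarith
      have hstle : F (quantile (distortedCDF h F) p) ≤ F (quantile (distortedCDF h F) p') := by
        by_contra hcon
        push_neg at hcon
        have : h (1 - F (quantile (distortedCDF h F) p))
            < h (1 - F (quantile (distortedCDF h F) p')) :=
          hstrict ⟨by linarith [humemF.2], by linarith [humemF.1]⟩
            ⟨by linarith [humemF'.2], by linarith [humemF'.1]⟩ (by linarith)
        rw [hhuF, hhuF'] at this
        linarith
      have hcore := aux_core μF μG hμFnull hμGnull hFc hFz hFstrict hF1 hFex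
        hGc hGz hGstrict hG1 hGex hkmono hκFmono hκGmono hκFnn hκGnn H1
        (fun v hv => ⟨(hEWF v hv).2.1, (hEWF v hv).2.2⟩)
        (fun v hv => (hEWG v hv).2.2) humemF humemF' hstle
      simp only
      rw [hewF, hewF', hewG, hewG', hs'_eq, ht'_eq]
      rw [div_le_div_iff₀
        (ENNReal.toReal_pos (hAF _ humemF).1 (hAF _ humemF).2)
        (ENNReal.toReal_pos (hAF _ humemF').1 (hAF _ humemF').2),
        ← ENNReal.toReal_mul, ← ENNReal.toReal_mul]
      exact ENNReal.toReal_mono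
        (ENNReal.mul_ne_top (hAG _ humemF').2 (hAF _ humemF).2) hcore
    · -- numerator vanishes
      intro a ha b hb _
      simp only
      rw [hzero G hGz hmeasHG hhnnG hhle1G HIG a ha.1, hzero G hGz hmeasHG hhnnG hhle1G HIG b hb.1,
        zero_div, zero_div]
  · -- denominator vanishes
    intro a ha b hb _
    simp only
    rw [hzero F hFz hmeasHF hhnnF hhle1F HIF a ha.1, hzero F hFz hmeasHF hhnnF hhle1F HIF b hb.1,
      div_zero, div_zero]
end
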